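/- arXiv:1909.03052 — 8 statements merged into one kernel-verified Lean document; each statement's English description precedes it below -/
import Mathlib

section
/- Let (X,d) be a metric space and let S = (X,(φ_j)_{j=1}^L,(p_j)_{j=1}^L) be an IFS with probabilities in which every φ_j is Lipschitz with constant at most α, where α < 1. Then the Markov operator M_S is Lipschitz with constant at most α with respect to the Monge–Kantorovich metric: for all compactly supported Borel probability measures μ, ν on X, d_MK(M_S(μ), M_S(ν)) ≤ α · d_MK(μ, ν); equivalently, for every 1-Lipschitz f : X → ℝ, |∫ f dM_S(μ) − ∫ f dM_S(ν)| ≤ α · d_MK(μ, ν). -/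
open MeasureTheory

/-- The Monge–Kantorovich (Hutchinson) distance between two measures. -/
noncomputable def dMK {X : Type*} [MetricSpace X] [MeasurableSpace X]
    (μ ν : Measure X) : ℝ :=
  sSup {s : ℝ | ∃ f : X → ℝ, LipschitzWith 1 f ∧ s = |∫ x, f x ∂μ - ∫ x, f x ∂ν|}

lemma integrable_of_compactSupport {X : Type*} [MetricSpace X] [MeasurableSpace X]
    [BorelSpace X] (μ : Measure X) [IsFiniteMeasure μ] {K : Set X}
    (hK : IsCompact K) (h0 : μ Kᶜ = 0) {g : X → ℝ} (hg : Continuous g) :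
    Integrable g μ := by
  have h1 : IntegrableOn g K μ := hg.continuousOn.integrableOn_compact hK
  have h2 : IntegrableOn g Kᶜ μ := by
    unfold IntegrableOn
    rw [Measure.restrict_eq_zero.mpr h0]
    exact integrable_zero_measure
  have h3 := h1.union h2
  simpa [Set.union_compl_self] using h3

lemma compactSupport_nonempty {X : Type*} [MetricSpace X] [MeasurableSpace X]
    (μ : Measure X) [IsProbabilityMeasure μ] {K : Set X} (h0 : μ Kᶜ = 0) :
    K.Nonempty := by
  by_contra h
  rw [Set.not_nonempty_iff_eq_empty] at h
  subst h
  simp at h0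

lemma bddAbove_dMK_set {X : Type*} [MetricSpace X] [MeasurableSpace X] [BorelSpace X]
    (μ ν : Measure X) [IsProbabilityMeasure μ] [IsProbabilityMeasure ν]
    (hμ : ∃ K : Set X, IsCompact K ∧ μ Kᶜ = 0)
    (hν : ∃ K : Set X, IsCompact K ∧ ν Kᶜ = 0) :
    BddAbove {s : ℝ | ∃ f : X → ℝ, LipschitzWith 1 f ∧ s = |∫ x, f x ∂μ - ∫ x, f x ∂ν|} := by
  obtain ⟨Kμ, hKμ, hμ0⟩ := hμ
  obtain ⟨Kν, hKν, hν0⟩ := hν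
  obtain ⟨x0, hx0⟩ := compactSupport_nonempty μ hμ0
  set K := Kμ ∪ Kν with hKdef
  have hK : IsCompact K := hKμ.union hKν
  have hx0K : x0 ∈ K := Set.mem_union_left _ hx0
  refine ⟨2 * Metric.diam K, ?_⟩
  rintro s ⟨f, hf, rfl⟩
  have hbound : ∀ (ρ : Measure X), IsProbabilityMeasure ρ → ∀ Kρ : Set X, Kρ ⊆ K →
      ρ Kρᶜ = 0 → |∫ x, f x ∂ρ - f x0| ≤ Metric.diam K := by
    intro ρ hρ Kρ hsub h0
    have hKρ0 : ρ Kᶜ = 0 :=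
      measure_mono_null (Set.compl_subset_compl.mpr hsub) h0
    have hfint : Integrable f ρ := integrable_of_compactSupport ρ hK hKρ0 hf.continuous
    have heq : ∫ x, f x ∂ρ - f x0 = ∫ x, (f x - f x0) ∂ρ := by
      rw [integral_sub hfint (integrable_const _)]
      simp
    rw [heq]
    calc |∫ x, (f x - f x0) ∂ρ| ≤ Metric.diam K * (ρ Set.univ).toReal := by
          rw [← Real.norm_eq_abs]
          apply norm_integral_le_of_norm_le_const
          have hae : ∀ᵐ x ∂ρ, x ∈ K := by
            rw [ae_iff]
            exact hKρ0
          filter_upwards [hae] with x hx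
          have h1 : dist (f x) (f x0) ≤ dist x x0 := by
            simpa using hf.dist_le_mul x x0
          calc ‖f x - f x0‖ = dist (f x) (f x0) := by rw [Real.dist_eq]; rfl
            _ ≤ dist x x0 := h1
            _ ≤ Metric.diam K := Metric.dist_le_diam_of_mem hK.isBounded hx hx0K
      _ = Metric.diam K := by simp
  calc |∫ x, f x ∂μ - ∫ x, f x ∂ν|
      = |(∫ x, f x ∂μ - f x0) - (∫ x, f x ∂ν - f x0)| := by ring_nf
    _ ≤ |∫ x, f x ∂μ - f x0| + |∫ x, f x ∂ν - f x0| := abs_sub _ _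
    _ ≤ Metric.diam K + Metric.diam K := by
        gcongr
        · exact hbound μ inferInstance Kμ Set.subset_union_left hμ0
        · exact hbound ν inferInstance Kν Set.subset_union_right hν0
    _ = 2 * Metric.diam K := by ring

lemma abs_le_dMK {X : Type*} [MetricSpace X] [MeasurableSpace X] [BorelSpace X]
    (μ ν : Measure X) [IsProbabilityMeasure μ] [IsProbabilityMeasure ν]
    (hμ : ∃ K : Set X, IsCompact K ∧ μ Kᶜ = 0)
    (hν : ∃ K : Set X, IsCompact K ∧ ν Kᶜ = 0)
    {f : X → ℝ} (hf : LipschitzWith 1 f) :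
    |∫ x, f x ∂μ - ∫ x, f x ∂ν| ≤ dMK μ ν :=
  le_csSup (bddAbove_dMK_set μ ν hμ hν) ⟨f, hf, rfl⟩

lemma dMK_nonneg {X : Type*} [MetricSpace X] [MeasurableSpace X] [BorelSpace X]
    (μ ν : Measure X) [IsProbabilityMeasure μ] [IsProbabilityMeasure ν]
    (hμ : ∃ K : Set X, IsCompact K ∧ μ Kᶜ = 0)
    (hν : ∃ K : Set X, IsCompact K ∧ ν Kᶜ = 0) :
    0 ≤ dMK μ ν := by
  have := abs_le_dMK μ ν hμ hν (f := fun _ => 0) ((LipschitzWith.const 0).weaken zero_le_one)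
  simpa using this.trans_eq' (by simp)

/-- Key per-map estimate. -/
lemma key_estimate {X : Type*} [MetricSpace X] [MeasurableSpace X] [BorelSpace X]
    (μ ν : Measure X) [IsProbabilityMeasure μ] [IsProbabilityMeasure ν]
    (hμ : ∃ K : Set X, IsCompact K ∧ μ Kᶜ = 0)
    (hν : ∃ K : Set X, IsCompact K ∧ ν Kᶜ = 0)
    {α : NNReal} {g : X → ℝ} (hg : LipschitzWith α g) :
    |∫ x, g x ∂μ - ∫ x, g x ∂ν| ≤ (α : ℝ) * dMK μ ν := by
  rcases eq_or_ne α 0 with hα0 | hα0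
  · subst hα0
    obtain ⟨Kμ, hKμ, hμ0⟩ := hμ
    obtain ⟨x0, hx0⟩ := compactSupport_nonempty μ hμ0
    have hconst : ∀ x, g x = g x0 := by
      intro x
      have := hg.dist_le_mul x x0
      simp at this
      exact dist_le_zero.mp (by simpa using this)
    have : (fun x => g x) = fun _ => g x0 := funext hconst
    rw [this]
    simp
  · have hαpos : (0:ℝ) < α := by positivity
    set h : X → ℝ := fun x => (α : ℝ)⁻¹ * g x with hdef
    have hh : LipschitzWith 1 h := by
      apply LipschitzWith.of_dist_le_mul
      intro x y
      have h1 := hg.dist_le_mul x y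
      rw [Real.dist_eq] at h1 ⊢
      rw [NNReal.coe_one, one_mul]
      calc |h x - h y| = (α:ℝ)⁻¹ * |g x - g y| := by
            rw [hdef]; simp [← mul_sub, abs_mul, abs_of_pos (inv_pos.mpr hαpos)]
        _ ≤ (α:ℝ)⁻¹ * ((α:ℝ) * dist x y) := by gcongr
        _ = dist x y := by field_simp
    have hle := abs_le_dMK μ ν hμ hν hh
    have heq : ∀ ρ : Measure X, ∫ x, h x ∂ρ = (α:ℝ)⁻¹ * ∫ x, g x ∂ρ := by
      intro ρ
      rw [hdef]
      exact integral_const_mul _ _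
    rw [heq μ, heq ν, ← mul_sub, abs_mul, abs_of_pos (inv_pos.mpr hαpos)] at hle
    calc |∫ x, g x ∂μ - ∫ x, g x ∂ν|
        = (α:ℝ) * ((α:ℝ)⁻¹ * |∫ x, g x ∂μ - ∫ x, g x ∂ν|) := by field_simp
      _ ≤ (α:ℝ) * dMK μ ν := by gcongr

/-- The Markov operator of an IFS with probabilities consisting of maps that are
Lipschitz with constant at most `α < 1` is Lipschitz with constant at most `α`
with respect to the Monge–Kantorovich metric. -/
theorem stmt3 {X : Type*} [MetricSpace X] [MeasurableSpace X] [BorelSpace X]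
    {L : ℕ} (hL : 0 < L)
    (φ : Fin L → X → X) (p : Fin L → NNReal)
    (hp : ∀ j, 0 < p j) (hp1 : ∑ j, p j = 1)
    (α : NNReal) (hα : α < 1) (hφ : ∀ j, LipschitzWith α (φ j))
    (μ ν : Measure X) [IsProbabilityMeasure μ] [IsProbabilityMeasure ν]
    (hμ : ∃ K : Set X, IsCompact K ∧ μ Kᶜ = 0)
    (hν : ∃ K : Set X, IsCompact K ∧ ν Kᶜ = 0) :
    dMK (∑ j, p j • μ.map (φ j)) (∑ j, p j • ν.map (φ j)) ≤ (α : ℝ) * dMK μ ν ∧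
    ∀ f : X → ℝ, LipschitzWith 1 f →
      |∫ x, f x ∂(∑ j, p j • μ.map (φ j)) - ∫ x, f x ∂(∑ j, p j • ν.map (φ j))|
        ≤ (α : ℝ) * dMK μ ν := by
  obtain ⟨Kμ, hKμ, hμ0⟩ := id hμ
  obtain ⟨Kν, hKν, hν0⟩ := id hν
  have hmain : ∀ f : X → ℝ, LipschitzWith 1 f →
      |∫ x, f x ∂(∑ j, p j • μ.map (φ j)) - ∫ x, f x ∂(∑ j, p j • ν.map (φ j))|
        ≤ (α : ℝ) * dMK μ ν := by
    intro f hf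
    -- integrals over the sum measures
    have hint : ∀ (ρ : Measure X), IsProbabilityMeasure ρ → ∀ K : Set X, IsCompact K →
        ρ Kᶜ = 0 → ∀ j, Integrable f (ρ.map (φ j)) := by
      intro ρ hρ K hK h0 j
      rw [integrable_map_measure hf.continuous.aestronglyMeasurable
        (hφ j).continuous.measurable.aemeasurable]
      exact integrable_of_compactSupport ρ hK h0 (hf.continuous.comp (hφ j).continuous)
    have hsum : ∀ (ρ : Measure X), IsProbabilityMeasure ρ → ∀ K : Set X, IsCompact K →
        ρ Kᶜ = 0 →
        ∫ x, f x ∂(∑ j, p j • ρ.map (φ j)) = ∑ j, (p j : ℝ) * ∫ x, f (φ j x) ∂ρ := by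
      intro ρ hρ K hK h0
      rw [integral_finset_sum_measure]
      · refine Finset.sum_congr rfl fun j _ => ?_
        rw [integral_smul_nnreal_measure,
          integral_map (hφ j).continuous.measurable.aemeasurable
            hf.continuous.aestronglyMeasurable]
        simp [NNReal.smul_def, smul_eq_mul]
      · intro j _
        exact (hint ρ hρ K hK h0 j).smul_measure ENNReal.coe_ne_top
    rw [hsum μ inferInstance Kμ hKμ hμ0, hsum ν inferInstance Kν hKν hν0,
      ← Finset.sum_sub_distrib]
    calc |∑ j, ((p j : ℝ) * ∫ x, f (φ j x) ∂μ - (p j : ℝ) * ∫ x, f (φ j x) ∂ν)|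
        ≤ ∑ j, |(p j : ℝ) * ∫ x, f (φ j x) ∂μ - (p j : ℝ) * ∫ x, f (φ j x) ∂ν| :=
          Finset.abs_sum_le_sum_abs _ _
      _ ≤ ∑ j : Fin L, (p j : ℝ) * ((α : ℝ) * dMK μ ν) := by
          apply Finset.sum_le_sum
          intro j _
          rw [← mul_sub, abs_mul, abs_of_nonneg (p j).coe_nonneg]
          have hkey : |∫ x, f (φ j x) ∂μ - ∫ x, f (φ j x) ∂ν| ≤ (α : ℝ) * dMK μ ν :=
            key_estimate μ ν hμ hν (hf.comp (hφ j) |>.weaken (by simp))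
          exact mul_le_mul_of_nonneg_left hkey (p j).coe_nonneg
      _ = (α : ℝ) * dMK μ ν := by
          have hps : ∑ j : Fin L, (p j : ℝ) = 1 := by exact_mod_cast hp1
          rw [← Finset.sum_mul, hps, one_mul]
  refine ⟨?_, hmain⟩
  apply Real.sSup_le
  · rintro s ⟨f, hf, rfl⟩
    exact hmain f hf
  · have := dMK_nonneg μ ν hμ hν
    positivity
end

section
/- Let (X,d) be a complete metric space, m ∈ ℕ, and let f : X^m → X be Lipschitz with constant α < 1 with respect to the maximum metric on X^m. Then there exists a unique point x* ∈ X with f(x*, ..., x*) = x*, and for every choice of x_0, ..., x_{m−1} ∈ X, the sequence defined by x_{k+m} = f(x_k, x_{k+1}, ..., x_{k+m−1}) for k ≥ 0 converges to x*. -/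
open Filter

/-- Generalized Banach fixed point theorem: a generalized Banach contraction
`f : Xᵐ → X` (with the maximum metric on `Xᵐ`) has a unique generalized fixed
point, and the sequences defined by `x_{k+m} = f(x_k, ..., x_{k+m-1})`
converge to it. -/
theorem stmt5 {X : Type*} [MetricSpace X] [CompleteSpace X] [Nonempty X]
    {m : ℕ} (hm : 0 < m)
    (f : (Fin m → X) → X) (α : NNReal) (hα : α < 1) (hf : LipschitzWith α f) :
    ∃ xstar : X, f (fun _ => xstar) = xstar ∧
      (∀ y : X, f (fun _ => y) = y → y = xstar) ∧
      ∀ x : ℕ → X, (∀ k : ℕ, x (k + m) = f (fun i => x (k + (i : ℕ)))) →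
        Tendsto x atTop (nhds xstar) := by
  set g : X → X := fun x => f (fun _ => x) with hg
  have hgl : LipschitzWith α g := by
    intro x y
    refine le_trans (hf _ _) ?_
    gcongr
    rw [edist_pi_def]
    exact Finset.sup_le fun i _ => le_rfl
  have hc : ContractingWith α g := ⟨hα, hgl⟩
  refine ⟨hc.fixedPoint, hc.fixedPoint_isFixedPt, fun y hy => hc.fixedPoint_unique hy, ?_⟩
  set xstar := hc.fixedPoint with hxs
  have hfix : f (fun _ => xstar) = xstar := hc.fixedPoint_isFixedPt
  intro x hx
  set M : NNReal := (Finset.range m).sup (fun i => nndist (x i) xstar) with hM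
  have hαlt : (α : ℝ) < 1 := hα
  -- key bound
  have key : ∀ n, dist (x n) xstar ≤ (α : ℝ) ^ (n / m) * M := by
    intro n
    induction n using Nat.strong_induction_on with
    | _ n ih =>
      rcases lt_or_ge n m with h | h
      · have : n / m = 0 := Nat.div_eq_of_lt h
        rw [this, pow_zero, one_mul]
        exact_mod_cast Finset.le_sup (f := fun i => nndist (x i) xstar)
          (Finset.mem_range.mpr h)
      · obtain ⟨k, rfl⟩ : ∃ k, n = k + m := ⟨n - m, (Nat.sub_add_cancel h).symm⟩
        have hstep : dist (x (k + m)) xstar ≤ (α : ℝ) * ((α : ℝ) ^ (k / m) * M) := by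
          rw [hx k]
          conv_lhs => rw [← hfix]
          refine le_trans (hf.dist_le_mul _ _) ?_
          gcongr
          refine dist_pi_le_iff (by positivity) |>.mpr fun i => ?_
          refine le_trans (ih (k + i) (by omega)) ?_
          exact mul_le_mul_of_nonneg_right
            (pow_le_pow_of_le_one α.coe_nonneg hαlt.le (Nat.div_le_div_right (by omega)))
            M.coe_nonneg
        refine hstep.trans (le_of_eq ?_)
        rw [Nat.add_div_right k hm, pow_succ]
        ring
  -- squeeze
  rw [tendsto_iff_dist_tendsto_zero]
  have hdiv : Tendsto (fun n => n / m) atTop atTop := by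
    refine tendsto_atTop_atTop.mpr fun b => ⟨b * m, fun n hn => ?_⟩
    exact (Nat.le_div_iff_mul_le hm).mpr hn
  have hpow : Tendsto (fun n : ℕ => (α : ℝ) ^ (n / m) * M) atTop (nhds 0) := by
    have := (tendsto_pow_atTop_nhds_zero_of_lt_one α.coe_nonneg hαlt).comp hdiv
    simpa using this.mul_const (M : ℝ)
  exact squeeze_zero (fun n => dist_nonneg) key hpow
end

section
/- Let (X,d) be a metric space, m ∈ ℕ, and let S = (X,(φ_j)_{j=1}^L) be a GIFS of order m in which each φ_j : X^m → X is Lipschitz with constant < 1 with respect to the maximum metric. Then the generalized Hutchinson operator F_S : K(X)^m → K(X), F_S(K_0,...,K_{m−1}) = ⋃_{j=1}^L φ_j(K_0 × ... × K_{m−1}), is Lipschitz with constant at most α_S := max{Lip(φ_j) : j = 1,...,L}: for all nonempty compact sets K_i, K'_i, h(F_S(K_0,...,K_{m−1}), F_S(K'_0,...,K'_{m−1})) ≤ α_S · max_i h(K_i, K'_i). -/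
open EMetric Metric Set
open scoped ENNReal NNReal

private lemma key_edist {X : Type*} [MetricSpace X] {m L : ℕ}
    (φ : Fin L → (Fin m → X) → X) (α : Fin L → NNReal)
    (hφ : ∀ j, LipschitzWith (α j) (φ j))
    (K K' : Fin m → Set X)
    (hK' : ∀ i, (K' i).Nonempty) (hK'c : ∀ i, IsCompact (K' i)) :
    ∀ x ∈ ⋃ j, φ j '' Set.univ.pi K, ∃ y ∈ ⋃ j, φ j '' Set.univ.pi K',
      edist x y ≤ (Finset.univ.sup α : NNReal) *
        ⨆ i, hausdorffEdist (K i) (K' i) := by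
  rintro x hx
  simp only [Set.mem_iUnion] at hx
  obtain ⟨j, a, ha, rfl⟩ := hx
  -- choose closest points coordinatewise
  have hb : ∀ i : Fin m, ∃ b ∈ K' i, edist (a i) b ≤ hausdorffEdist (K i) (K' i) := by
    intro i
    obtain ⟨b, hb, hbe⟩ := (hK'c i).exists_infEdist_eq_edist (hK' i) (a i)
    exact ⟨b, hb, hbe ▸ infEdist_le_hausdorffEdist_of_mem (ha i (Set.mem_univ i))⟩
  choose b hbmem hbe using hb
  refine ⟨φ j b, Set.mem_iUnion.2 ⟨j, b, fun i _ => hbmem i, rfl⟩, ?_⟩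
  calc edist (φ j a) (φ j b) ≤ (α j : ℝ≥0∞) * edist a b := hφ j a b
    _ ≤ (Finset.univ.sup α : NNReal) * ⨆ i, hausdorffEdist (K i) (K' i) := by
        gcongr
        · exact_mod_cast Finset.le_sup (Finset.mem_univ j)
        · exact edist_pi_le_iff.2 fun i =>
            (hbe i).trans (le_iSup (fun i => hausdorffEdist (K i) (K' i)) i)

/-- The generalized Hutchinson operator of a GIFS of generalized Banach
contractions is Lipschitz with constant at most `α_S = max_j Lip(φ_j)`, with
respect to the Hausdorff–Pompeiu metric and the maximum metric on products. -/
theorem stmt6 {X : Type*} [MetricSpace X] {m L : ℕ} (hm : 0 < m) (hL : 0 < L)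
    (φ : Fin L → (Fin m → X) → X) (α : Fin L → NNReal)
    (hφ : ∀ j, LipschitzWith (α j) (φ j)) (hα : ∀ j, α j < 1)
    (K K' : Fin m → Set X)
    (hK : ∀ i, (K i).Nonempty) (hKc : ∀ i, IsCompact (K i))
    (hK' : ∀ i, (K' i).Nonempty) (hK'c : ∀ i, IsCompact (K' i)) :
    Metric.hausdorffDist (⋃ j, φ j '' Set.univ.pi K) (⋃ j, φ j '' Set.univ.pi K')
      ≤ ((Finset.univ.sup α : NNReal) : ℝ) *
          ⨆ i, Metric.hausdorffDist (K i) (K' i) := by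
  haveI : Nonempty (Fin m) := Fin.pos_iff_nonempty.1 hm
  set r : ℝ≥0∞ := ⨆ i, hausdorffEdist (K i) (K' i) with hr
  have hfin : ∀ i, hausdorffEdist (K i) (K' i) ≠ ⊤ := fun i =>
    hausdorffEdist_ne_top_of_nonempty_of_bounded (hK i) (hK' i)
      (hKc i).isBounded (hK'c i).isBounded
  have hrfin : r ≠ ⊤ := by
    have hle : r ≤ Finset.univ.sup fun i => hausdorffEdist (K i) (K' i) :=
      iSup_le fun i => Finset.le_sup (f := fun i => hausdorffEdist (K i) (K' i)) (Finset.mem_univ i)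
    refine (hle.trans_lt ?_).ne
    exact (Finset.sup_lt_iff (by exact bot_lt_top)).2 fun i _ => (hfin i).lt_top
  have hE : hausdorffEdist (⋃ j, φ j '' Set.univ.pi K) (⋃ j, φ j '' Set.univ.pi K')
      ≤ (Finset.univ.sup α : NNReal) * r :=
    hausdorffEdist_le_of_mem_edist
      (key_edist φ α hφ K K' hK' hK'c)
      (fun x hx => by
        obtain ⟨y, hy, hxy⟩ := key_edist φ α hφ K' K hK hKc x hx
        refine ⟨y, hy, ?_⟩
        rw [show (⨆ i, hausdorffEdist (K' i) (K i)) = r from by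
          simp only [hr, hausdorffEdist_comm]; exact iSup_congr fun i => hausdorffEdist_comm] at hxy
        exact hxy)
  have hprod_fin : (Finset.univ.sup α : NNReal) * r ≠ ⊤ :=
    ENNReal.mul_ne_top ENNReal.coe_ne_top hrfin
  calc Metric.hausdorffDist (⋃ j, φ j '' Set.univ.pi K) (⋃ j, φ j '' Set.univ.pi K')
      = (hausdorffEdist (⋃ j, φ j '' Set.univ.pi K) (⋃ j, φ j '' Set.univ.pi K')).toReal := rfl
    _ ≤ ((Finset.univ.sup α : NNReal) * r : ℝ≥0∞).toReal :=
        ENNReal.toReal_mono hprod_fin hE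
    _ = ((Finset.univ.sup α : NNReal) : ℝ) * r.toReal := by
        rw [ENNReal.toReal_mul, ENNReal.coe_toReal]
    _ ≤ ((Finset.univ.sup α : NNReal) : ℝ) * ⨆ i, Metric.hausdorffDist (K i) (K' i) := by
        refine mul_le_mul_of_nonneg_left ?_ (NNReal.coe_nonneg _)
        have hbdd : BddAbove (Set.range fun i => Metric.hausdorffDist (K i) (K' i)) :=
          (Set.finite_range _).bddAbove
        have hS : 0 ≤ ⨆ i, Metric.hausdorffDist (K i) (K' i) :=
          Real.iSup_nonneg fun i => Metric.hausdorffDist_nonneg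
        refine ENNReal.toReal_le_of_le_ofReal hS (iSup_le fun i => ?_)
        rw [← ENNReal.ofReal_toReal (hfin i)]
        exact ENNReal.ofReal_le_ofReal (le_ciSup hbdd i)
end

section
/- Let (X,d) be a complete metric space and let S = (X,(φ_j)_{j=1}^L) be a GIFS of order m in which each φ_j : X^m → X is Lipschitz with constant < 1 with respect to the maximum metric. Then there exists a unique nonempty compact set A_S ⊆ X with A_S = ⋃_{j=1}^L φ_j(A_S × ... × A_S), and for every choice of nonempty compact sets K_0, ..., K_{m−1} ⊆ X, the sequence defined by K_{k+m} := F_S(K_k, ..., K_{k+m−1}) converges to A_S in the Hausdorff–Pompeiu metric. -/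
open Filter Metric EMetric Set
open scoped ENNReal NNReal

section Aux

variable {X : Type*} [MetricSpace X]

/-- Approximation in a product of compact sets. -/
lemma aux_pi_approx {m : ℕ} {K K' : Fin m → Set X}
    (hc' : ∀ i, IsCompact (K' i)) (hn' : ∀ i, (K' i).Nonempty)
    {r : ℝ≥0∞} (hr : ∀ i, EMetric.hausdorffEdist (K i) (K' i) ≤ r)
    {x : Fin m → X} (hx : ∀ i, x i ∈ K i) :
    ∃ y ∈ Set.univ.pi K', edist x y ≤ r := by
  have h : ∀ i, ∃ yi ∈ K' i, edist (x i) yi ≤ r := by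
    intro i
    obtain ⟨yi, hyi, hey⟩ := (hc' i).exists_infEdist_eq_edist (hn' i) (x i)
    exact ⟨yi, hyi, by
      rw [← hey]
      exact le_trans (infEdist_le_hausdorffEdist_of_mem (hx i)) (hr i)⟩
  choose y hy hey using h
  exact ⟨y, fun i _ => hy i, edist_pi_le_iff.2 hey⟩

/-- Core contraction estimate for the generalized Hutchinson operator (edist form). -/
lemma aux_core {m L : ℕ} (φ : Fin L → (Fin m → X) → X) (c : ℝ≥0)
    (hφ : ∀ j, LipschitzWith c (φ j))
    {K K' : Fin m → Set X}
    (hcK : ∀ i, IsCompact (K i)) (hnK : ∀ i, (K i).Nonempty)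
    (hcK' : ∀ i, IsCompact (K' i)) (hnK' : ∀ i, (K' i).Nonempty)
    {r : ℝ≥0∞} (hr : ∀ i, EMetric.hausdorffEdist (K i) (K' i) ≤ r) :
    EMetric.hausdorffEdist (⋃ j, φ j '' Set.univ.pi K) (⋃ j, φ j '' Set.univ.pi K') ≤ c * r := by
  have hr' : ∀ i, EMetric.hausdorffEdist (K' i) (K i) ≤ r := fun i =>
    by exact (EMetric.hausdorffEdist_comm).trans_le (hr i)
  apply EMetric.hausdorffEdist_le_of_mem_edist
  · rintro x hx
    obtain ⟨j, a, ha, rfl⟩ := by simpa using hx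
    obtain ⟨y, hy, hey⟩ := aux_pi_approx hcK' hnK' hr ha
    exact ⟨φ j y, Set.mem_iUnion.2 ⟨j, Set.mem_image_of_mem _ hy⟩,
      le_trans ((hφ j).edist_le_mul a y) (mul_le_mul_right hey c)⟩
  · rintro x hx
    obtain ⟨j, a, ha, rfl⟩ := by simpa using hx
    obtain ⟨y, hy, hey⟩ := aux_pi_approx hcK hnK hr' ha
    exact ⟨φ j y, Set.mem_iUnion.2 ⟨j, Set.mem_image_of_mem _ hy⟩,
      le_trans ((hφ j).edist_le_mul a y) (mul_le_mul_right hey c)⟩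

/-- Core contraction estimate, real Hausdorff distance form. -/
lemma aux_core_dist {m L : ℕ} (φ : Fin L → (Fin m → X) → X) (c : ℝ≥0)
    (hφ : ∀ j, LipschitzWith c (φ j))
    {K K' : Fin m → Set X}
    (hcK : ∀ i, IsCompact (K i)) (hnK : ∀ i, (K i).Nonempty)
    (hcK' : ∀ i, IsCompact (K' i)) (hnK' : ∀ i, (K' i).Nonempty)
    {R : ℝ} (hR : 0 ≤ R) (hr : ∀ i, Metric.hausdorffDist (K i) (K' i) ≤ R) :
    Metric.hausdorffDist (⋃ j, φ j '' Set.univ.pi K) (⋃ j, φ j '' Set.univ.pi K')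
      ≤ c * R := by
  have hre : ∀ i, EMetric.hausdorffEdist (K i) (K' i) ≤ ENNReal.ofReal R := by
    intro i
    have hne : EMetric.hausdorffEdist (K i) (K' i) ≠ ⊤ :=
      Metric.hausdorffEdist_ne_top_of_nonempty_of_bounded (hnK i) (hnK' i)
        (hcK i).isBounded (hcK' i).isBounded
    rw [ENNReal.le_ofReal_iff_toReal_le hne hR]
    exact hr i
  have h := aux_core φ c hφ hcK hnK hcK' hnK' hre
  have h2 : (c : ℝ≥0∞) * ENNReal.ofReal R = ENNReal.ofReal ((c : ℝ) * R) := by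
    rw [ENNReal.ofReal_mul c.coe_nonneg, ENNReal.ofReal_coe_nnreal]
  exact ENNReal.toReal_le_of_le_ofReal (mul_nonneg c.coe_nonneg hR) (h2 ▸ h)

end Aux

/-- A GIFS of generalized Banach contractions on a complete metric space admits a
unique attractor, and the set sequences `K_{k+m} = F_S(K_k, ..., K_{k+m-1})`
converge to it in the Hausdorff–Pompeiu metric. -/
theorem stmt7 {X : Type*} [MetricSpace X] [CompleteSpace X] [Nonempty X]
    {m L : ℕ} (hm : 0 < m) (hL : 0 < L)
    (φ : Fin L → (Fin m → X) → X) (α : Fin L → NNReal)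
    (hφ : ∀ j, LipschitzWith (α j) (φ j)) (hα : ∀ j, α j < 1) :
    ∃ A : Set X, A.Nonempty ∧ IsCompact A ∧
      A = ⋃ j, φ j '' Set.univ.pi (fun _ => A) ∧
      (∀ B : Set X, B.Nonempty → IsCompact B →
        B = ⋃ j, φ j '' Set.univ.pi (fun _ => B) → B = A) ∧
      ∀ K : ℕ → Set X,
        (∀ i, i < m → (K i).Nonempty ∧ IsCompact (K i)) →
        (∀ k : ℕ, K (k + m) = ⋃ j, φ j '' Set.univ.pi (fun i : Fin m => K (k + (i : ℕ)))) →
        Tendsto (fun n => Metric.hausdorffDist (K n) A) atTop (nhds 0) := by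
  -- the common contraction constant
  set c : ℝ≥0 := Finset.univ.sup α with hc_def
  have hαc : ∀ j, α j ≤ c := fun j => Finset.le_sup (Finset.mem_univ j)
  have hc1 : c < 1 := by
    rw [hc_def, Finset.sup_lt_iff (by norm_num : (⊥ : ℝ≥0) < 1)]
    exact fun j _ => hα j
  have hφc : ∀ j, LipschitzWith c (φ j) := fun j => (hφ j).weaken (hαc j)
  -- the Hutchinson operator on set families
  set G : (Fin m → Set X) → Set X := fun K => ⋃ j, φ j '' Set.univ.pi K with hG_def
  have hGc : ∀ K : Fin m → Set X, (∀ i, IsCompact (K i)) → IsCompact (G K) := fun K h =>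
    isCompact_iUnion fun j => (isCompact_univ_pi h).image (hφ j).continuous
  have hGn : ∀ K : Fin m → Set X, (∀ i, (K i).Nonempty) → (G K).Nonempty := by
    intro K h
    obtain ⟨a, ha⟩ := Set.univ_pi_nonempty_iff.2 h
    exact ⟨φ ⟨0, hL⟩ a, Set.mem_iUnion.2 ⟨⟨0, hL⟩, Set.mem_image_of_mem _ ha⟩⟩
  -- the induced contraction on nonempty compacts
  set T : TopologicalSpace.NonemptyCompacts X → TopologicalSpace.NonemptyCompacts X :=
    fun A => ⟨⟨G (fun _ => A), hGc _ (fun _ => A.isCompact)⟩, hGn _ (fun _ => A.nonempty)⟩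
    with hT_def
  have hT : ContractingWith c T := by
    refine ⟨hc1, LipschitzWith.of_dist_le_mul fun A B => ?_⟩
    exact aux_core_dist φ c hφc (fun _ => A.isCompact) (fun _ => A.nonempty)
      (fun _ => B.isCompact) (fun _ => B.nonempty) dist_nonneg (fun _ => le_refl _)
  haveI : Nonempty (TopologicalSpace.NonemptyCompacts X) :=
    ⟨⟨⟨{Classical.arbitrary X}, isCompact_singleton⟩, Set.singleton_nonempty _⟩⟩
  set A₀ : TopologicalSpace.NonemptyCompacts X := ContractingWith.fixedPoint T hT with hA₀_def
  have hfix : T A₀ = A₀ := hT.fixedPoint_isFixedPt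
  set A : Set X := (A₀ : Set X) with hA_def
  have hAeq : A = ⋃ j, φ j '' Set.univ.pi (fun _ => A) :=
    (congrArg (fun s : TopologicalSpace.NonemptyCompacts X => (s : Set X)) hfix).symm
  have hAc : IsCompact A := A₀.isCompact
  have hAn : A.Nonempty := A₀.nonempty
  refine ⟨A, hAn, hAc, hAeq, ?_, ?_⟩
  · -- uniqueness
    intro B hBn hBc hBeq
    set B₀ : TopologicalSpace.NonemptyCompacts X := ⟨⟨B, hBc⟩, hBn⟩ with hB_def
    have : T B₀ = B₀ := TopologicalSpace.NonemptyCompacts.ext hBeq.symm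
    have : B₀ = A₀ := hT.fixedPoint_unique (x := B₀) this
    exact congrArg (fun s : TopologicalSpace.NonemptyCompacts X => (s : Set X)) this
  · -- convergence
    intro K hK0 hKrec
    have hKnc : ∀ n, (K n).Nonempty ∧ IsCompact (K n) := by
      intro n
      induction n using Nat.strong_induction_on with
      | _ n ih =>
        rcases lt_or_ge n m with h | h
        · exact hK0 n h
        · have hn : n = (n - m) + m := (Nat.sub_add_cancel h).symm
          rw [hn, hKrec]
          have hprev : ∀ i : Fin m, (K (n - m + (i : ℕ))).Nonempty ∧
              IsCompact (K (n - m + (i : ℕ))) := by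
            intro i
            apply ih
            omega
          constructor
          · exact hGn _ (fun i => (hprev i).1)
          · exact hGc _ (fun i => (hprev i).2)
    set d : ℕ → ℝ := fun n => Metric.hausdorffDist (K n) A with hd_def
    have hd0 : ∀ n, 0 ≤ d n := fun n => Metric.hausdorffDist_nonneg
    have hstep : ∀ k (R : ℝ), 0 ≤ R → (∀ i : Fin m, d (k + (i : ℕ)) ≤ R) →
        d (k + m) ≤ c * R := by
      intro k R hR hiR
      have : d (k + m) = Metric.hausdorffDist
          (⋃ j, φ j '' Set.univ.pi (fun i : Fin m => K (k + (i : ℕ))))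
          (⋃ j, φ j '' Set.univ.pi (fun _ : Fin m => A)) := by
        rw [hd_def]
        simp only
        rw [hKrec k, ← hAeq]
      rw [this]
      exact aux_core_dist φ c hφc (fun i => (hKnc _).2) (fun i => (hKnc _).1)
        (fun _ => hAc) (fun _ => hAn) hR hiR
    -- global bound
    set M : ℝ := ∑ i ∈ Finset.range m, d i with hM_def
    have hM0 : 0 ≤ M := Finset.sum_nonneg fun i _ => hd0 i
    have hMle : ∀ i, i < m → d i ≤ M := fun i hi =>
      Finset.single_le_sum (fun i _ => hd0 i) (Finset.mem_range.2 hi)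
    have hbound : ∀ n, d n ≤ (c : ℝ) ^ (n / m) * M := by
      intro n
      induction n using Nat.strong_induction_on with
      | _ n ih =>
        rcases lt_or_ge n m with h | h
        · rw [Nat.div_eq_of_lt h, pow_zero, one_mul]
          exact hMle n h
        · have hn : n = (n - m) + m := (Nat.sub_add_cancel h).symm
          set k := n - m with hk_def
          have hiR : ∀ i : Fin m, d (k + (i : ℕ)) ≤ (c : ℝ) ^ (k / m) * M := by
            intro i
            have h1 : d (k + (i : ℕ)) ≤ (c : ℝ) ^ ((k + (i : ℕ)) / m) * M := by
              apply ih; omega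
            refine h1.trans (mul_le_mul_of_nonneg_right ?_ hM0)
            exact pow_le_pow_of_le_one c.coe_nonneg (by exact_mod_cast hc1.le)
              (Nat.div_le_div_right (Nat.le_add_right k i))
          have h2 := hstep k _ (mul_nonneg (pow_nonneg c.coe_nonneg _) hM0) hiR
          have h3 : (c : ℝ) * ((c : ℝ) ^ (k / m) * M) = (c : ℝ) ^ (k / m + 1) * M := by
            rw [pow_succ]; ring
          have h4 : n / m = k / m + 1 := by
            rw [hn, Nat.add_div_right _ hm]
          rw [h4]
          calc d n = d (k + m) := by rw [← hn]
            _ ≤ (c : ℝ) * ((c : ℝ) ^ (k / m) * M) := h2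
            _ = (c : ℝ) ^ (k / m + 1) * M := h3
    -- conclude by squeezing
    have hdivtop : Tendsto (fun n : ℕ => n / m) atTop atTop := by
      apply tendsto_atTop_atTop.2
      intro b
      exact ⟨b * m + m, fun n hn => (Nat.le_div_iff_mul_le hm).2 (by omega)⟩
    have hpow : Tendsto (fun n : ℕ => (c : ℝ) ^ n) atTop (nhds 0) :=
      tendsto_pow_atTop_nhds_zero_of_lt_one c.coe_nonneg (by exact_mod_cast hc1)
    have hlim : Tendsto (fun n : ℕ => (c : ℝ) ^ (n / m) * M) atTop (nhds 0) := by
      have := (hpow.comp hdivtop).mul_const M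
      simpa using this
    exact squeeze_zero hd0 hbound hlim
end

section
/- Let (X,d) be a metric space, m ≥ 1, and let φ : X^m → X satisfy d(φ(x_0,...,x_{m−1}), φ(y_0,...,y_{m−1})) ≤ Σ_{i=0}^{m−1} a_i · d(x_i, y_i) for all points, where a_0, ..., a_{m−1} ≥ 0. Then for every 1-Lipschitz f : X → ℝ and all compactly supported Borel probability measures μ_0, ..., μ_{m−1}, ν_0, ..., ν_{m−1} on X: |∫_{X^m} f∘φ d(μ_0 × ... × μ_{m−1}) − ∫_{X^m} f∘φ d(ν_0 × ... × ν_{m−1})| ≤ Σ_{i=0}^{m−1} a_i · d_MK(μ_i, ν_i), where μ_0 × ... × μ_{m−1} denotes the product measure. -/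
open MeasureTheory

section Aux

open Set

variable {X : Type*} [MetricSpace X] [MeasurableSpace X] [BorelSpace X]

lemma lip_integrable {μ : Measure X} [IsProbabilityMeasure μ] {K : Set X}
    (hK : IsCompact K) (hμ : μ Kᶜ = 0) {g : X → ℝ} {c : NNReal} (hg : LipschitzWith c g) :
    Integrable g μ := by
  obtain ⟨R, hR⟩ := (hK.image hg.continuous).isBounded.subset_closedBall 0
  have haeK : ∀ᵐ x ∂μ, x ∈ K := mem_ae_iff.2 (by simpa using hμ)
  refine Integrable.mono' (integrable_const R) hg.continuous.measurable.aestronglyMeasurable ?_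
  filter_upwards [haeK] with x hx
  have : g x ∈ Metric.closedBall (0 : ℝ) R := hR ⟨x, hx, rfl⟩
  simpa [Real.norm_eq_abs, Metric.mem_closedBall, Real.dist_eq] using this

lemma dMK_set_bddAbove (μ ν : Measure X) [IsProbabilityMeasure μ] [IsProbabilityMeasure ν]
    {K L : Set X} (hK : IsCompact K) (hμ : μ Kᶜ = 0) (hL : IsCompact L) (hν : ν Lᶜ = 0) :
    BddAbove {s : ℝ | ∃ f : X → ℝ, LipschitzWith 1 f ∧ s = |∫ x, f x ∂μ - ∫ x, f x ∂ν|} := by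
  have hKne : K.Nonempty := by
    by_contra hne
    rw [Set.not_nonempty_iff_eq_empty] at hne
    subst hne
    simp only [Set.compl_empty] at hμ
    have := measure_univ (μ := μ)
    rw [hμ] at this
    exact zero_ne_one this
  obtain ⟨x₀, hx₀⟩ := hKne
  obtain ⟨R, hR⟩ := (hK.union hL).isBounded.subset_closedBall x₀
  refine ⟨2 * R, ?_⟩
  rintro s ⟨g, hg, rfl⟩
  have hgint : Integrable g μ := lip_integrable hK hμ hg
  have hgint' : Integrable g ν := lip_integrable hL hν hg
  have haeK : ∀ᵐ x ∂μ, x ∈ K := mem_ae_iff.2 (by simpa using hμ)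
  have haeL : ∀ᵐ x ∂ν, x ∈ L := mem_ae_iff.2 (by simpa using hν)
  have hμeq : ∫ x, g x ∂μ - g x₀ = ∫ x, (g x - g x₀) ∂μ := by
    rw [integral_sub hgint (integrable_const _), integral_const]
    simp [measure_univ]
  have hνeq : ∫ x, g x ∂ν - g x₀ = ∫ x, (g x - g x₀) ∂ν := by
    rw [integral_sub hgint' (integrable_const _), integral_const]
    simp [measure_univ]
  have hb : ∀ x, x ∈ K ∪ L → ‖g x - g x₀‖ ≤ R := by
    intro x hx
    have h1 : dist (g x) (g x₀) ≤ 1 * dist x x₀ := hg.dist_le_mul x x₀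
    have h2 : dist x x₀ ≤ R := hR hx
    rw [Real.norm_eq_abs, ← Real.dist_eq]
    linarith
  have hμb : ‖∫ x, (g x - g x₀) ∂μ‖ ≤ R := by
    have := norm_integral_le_of_norm_le (μ := μ) (integrable_const R)
      (by filter_upwards [haeK] with x hx using hb x (Or.inl hx))
    simpa [measure_univ] using this
  have hνb : ‖∫ x, (g x - g x₀) ∂ν‖ ≤ R := by
    have := norm_integral_le_of_norm_le (μ := ν) (integrable_const R)
      (by filter_upwards [haeL] with x hx using hb x (Or.inr hx))
    simpa [measure_univ] using this
  have : ∫ x, g x ∂μ - ∫ x, g x ∂ν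
      = (∫ x, (g x - g x₀) ∂μ) - ∫ x, (g x - g x₀) ∂ν := by
    rw [← hμeq, ← hνeq]; ring
  rw [this]
  rw [Real.norm_eq_abs] at hμb hνb
  calc |(∫ x, (g x - g x₀) ∂μ) - ∫ x, (g x - g x₀) ∂ν|
      ≤ |∫ x, (g x - g x₀) ∂μ| + |∫ x, (g x - g x₀) ∂ν| := abs_sub _ _
    _ ≤ 2 * R := by linarith

lemma abs_integral_sub_le_mul_dMK (μ ν : Measure X) [IsProbabilityMeasure μ]
    [IsProbabilityMeasure ν]
    {K L : Set X} (hK : IsCompact K) (hμ : μ Kᶜ = 0) (hL : IsCompact L) (hν : ν Lᶜ = 0)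
    {r : ℝ} (hr : 0 ≤ r) {g : X → ℝ} (hg : LipschitzWith r.toNNReal g) :
    |∫ x, g x ∂μ - ∫ x, g x ∂ν| ≤ r * dMK μ ν := by
  have hbdd := dMK_set_bddAbove μ ν hK hμ hL hν
  rcases eq_or_lt_of_le hr with hr0 | hrpos
  · -- r = 0 : g is constant
    have hconst : ∀ x y : X, g x = g y := by
      intro x y
      have := hg.dist_le_mul x y
      rw [← hr0] at this
      simp only [Real.toNNReal_zero, NNReal.coe_zero, zero_mul] at this
      exact dist_le_zero.1 this
    have hKne : K.Nonempty := by
      by_contra hne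
      rw [Set.not_nonempty_iff_eq_empty] at hne
      subst hne
      simp only [Set.compl_empty] at hμ
      have := measure_univ (μ := μ)
      rw [hμ] at this
      exact zero_ne_one this
    obtain ⟨x₀, _⟩ := hKne
    have hgc : g = fun _ => g x₀ := funext fun x => hconst x x₀
    rw [hgc]
    simp [integral_const, measure_univ, ← hr0]
  · -- r > 0
    set g' : X → ℝ := fun x => r⁻¹ * g x with hg'
    have hg'lip : LipschitzWith 1 g' := by
      apply LipschitzWith.of_dist_le_mul
      intro x y
      have := hg.dist_le_mul x y
      rw [Real.coe_toNNReal r hr] at this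
      rw [Real.dist_eq]
      simp only [g']
      rw [← mul_sub, abs_mul, abs_of_pos (inv_pos.2 hrpos), ← Real.dist_eq]
      rw [NNReal.coe_one, one_mul]
      calc r⁻¹ * dist (g x) (g y) ≤ r⁻¹ * (r * dist x y) := by
            exact mul_le_mul_of_nonneg_left this (by positivity)
        _ = dist x y := by field_simp
    have hmem : |∫ x, g' x ∂μ - ∫ x, g' x ∂ν|
        ∈ {s : ℝ | ∃ f : X → ℝ, LipschitzWith 1 f ∧ s = |∫ x, f x ∂μ - ∫ x, f x ∂ν|} :=
      ⟨g', hg'lip, rfl⟩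
    have hle : |∫ x, g' x ∂μ - ∫ x, g' x ∂ν| ≤ dMK μ ν := le_csSup hbdd hmem
    have hint : ∀ (κ : Measure X), ∫ x, g' x ∂κ = r⁻¹ * ∫ x, g x ∂κ := by
      intro κ; simp only [g']; rw [integral_const_mul]
    rw [hint μ, hint ν, ← mul_sub, abs_mul, abs_of_pos (inv_pos.2 hrpos)] at hle
    calc |∫ x, g x ∂μ - ∫ x, g x ∂ν|
        = r * (r⁻¹ * |∫ x, g x ∂μ - ∫ x, g x ∂ν|) := by field_simp
      _ ≤ r * dMK μ ν := mul_le_mul_of_nonneg_left hle hr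

end Aux

section Key

open Set

variable {X : Type*} [MetricSpace X] [MeasurableSpace X] [BorelSpace X]

lemma key_step {n : ℕ} (φ : (Fin (n+1) → X) → X) (a : Fin (n+1) → ℝ) (ha : ∀ i, 0 ≤ a i)
    (hφ : ∀ x y : Fin (n+1) → X, dist (φ x) (φ y) ≤ ∑ i, a i * dist (x i) (y i))
    (f : X → ℝ) (hf : LipschitzWith 1 f)
    {S : Set X} (hS : IsCompact S)
    {h : (Fin (n+1) → X) → ℝ} (hmeas : Measurable h)
    (hhF : ∀ z ∈ Set.pi Set.univ (fun _ : Fin (n+1) => S), h z = f (φ z))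
    (σ τ : Fin (n+1) → Measure X)
    [∀ i, IsProbabilityMeasure (σ i)] [∀ i, IsProbabilityMeasure (τ i)]
    (hσS : ∀ i, σ i Sᶜ = 0) (hτS : ∀ i, τ i Sᶜ = 0)
    (j : Fin (n+1)) (hagree : ∀ i, i ≠ j → σ i = τ i) :
    |∫ z, h z ∂Measure.pi σ - ∫ z, h z ∂Measure.pi τ| ≤ a j * dMK (σ j) (τ j) := by
  classical
  -- the product of the remaining coordinates
  set T' : Set (Fin n → X) := Set.pi Set.univ (fun _ => S) with hT'def
  set ρ : Measure (Fin n → X) := Measure.pi (fun k => σ (j.succAbove k)) with hρdef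
  haveI : IsProbabilityMeasure ρ := by rw [hρdef]; infer_instance
  have hρτ : Measure.pi (fun k => τ (j.succAbove k)) = ρ := by
    rw [hρdef]; congr 1; funext k; exact (hagree _ (Fin.succAbove_ne j k)).symm
  set e := MeasurableEquiv.piFinSuccAbove (fun _ : Fin (n+1) => X) j with hedef
  set H : X × (Fin n → X) → ℝ := fun w => h (j.insertNth w.1 w.2) with hHdef
  have hHe : ∀ z : Fin (n+1) → X, H (e z) = h z := by
    intro z
    show h (j.insertNth ((e z).1) ((e z).2)) = h z
    have h1 : (e z).1 = z j := rfl
    have h2 : (e z).2 = j.removeNth z := rfl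
    rw [h1, h2, Fin.insertNth_self_removeNth]
  have mpσ := measurePreserving_piFinSuccAbove σ j
  have mpτ := measurePreserving_piFinSuccAbove τ j
  have hIσ : ∫ z, h z ∂Measure.pi σ = ∫ w, H w ∂((σ j).prod ρ) := by
    rw [← mpσ.integral_comp' H]
    exact integral_congr_ae (Filter.Eventually.of_forall fun z => (hHe z).symm)
  have hIτ : ∫ z, h z ∂Measure.pi τ = ∫ w, H w ∂((τ j).prod ρ) := by
    rw [← hρτ, ← mpτ.integral_comp' H]
    exact integral_congr_ae (Filter.Eventually.of_forall fun z => (hHe z).symm)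
  -- continuity and boundedness of f ∘ φ on the compact product
  have hφcont : Continuous φ := by
    refine LipschitzWith.continuous (K := (∑ i, a i).toNNReal) ?_
    apply LipschitzWith.of_dist_le_mul
    intro x y
    rw [Real.coe_toNNReal _ (Finset.sum_nonneg fun i _ => ha i)]
    calc dist (φ x) (φ y) ≤ ∑ i, a i * dist (x i) (y i) := hφ x y
      _ ≤ ∑ i, a i * dist x y :=
          Finset.sum_le_sum fun i _ =>
            mul_le_mul_of_nonneg_left (dist_le_pi_dist x y i) (ha i)
      _ = (∑ i, a i) * dist x y := (Finset.sum_mul _ _ _).symm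
  obtain ⟨M, hM⟩ := (isCompact_univ_pi fun _ : Fin (n+1) => hS).exists_bound_of_continuousOn
    ((hf.continuous.comp hφcont).continuousOn (s := Set.pi Set.univ (fun _ : Fin (n+1) => S)))
  have hmemT : ∀ x ∈ S, ∀ y ∈ T', j.insertNth x y ∈ Set.pi Set.univ (fun _ : Fin (n+1) => S) := by
    intro x hx y hy
    intro i _
    refine Fin.succAboveCases j ?_ ?_ i
    · rw [Fin.insertNth_apply_same]; exact hx
    · intro k
      rw [Fin.insertNth_apply_succAbove]
      exact hy k (Set.mem_univ _)
  have hb : ∀ w : X × (Fin n → X), w ∈ S ×ˢ T' → ‖H w‖ ≤ M := by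
    rintro ⟨x, y⟩ ⟨hx, hy⟩
    have hmem := hmemT x hx y hy
    rw [hHdef]
    simp only
    rw [hhF _ hmem]
    exact hM _ hmem
  have hT'null : ρ T'ᶜ = 0 := by
    have hsub : T'ᶜ ⊆ ⋃ k : Fin n, (fun y : Fin n → X => y k) ⁻¹' Sᶜ := by
      intro y hy
      simp only [hT'def, Set.mem_compl_iff, Set.mem_pi, Set.mem_univ, forall_true_left,
        not_forall] at hy
      obtain ⟨k, hk⟩ := hy
      exact Set.mem_iUnion.2 ⟨k, hk⟩
    refine measure_mono_null hsub (measure_iUnion_null fun k => ?_)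
    exact Measure.pi_eval_preimage_null _ (hσS _)
  have haeT' : ∀ᵐ y ∂ρ, y ∈ T' := mem_ae_iff.2 (by simpa using hT'null)
  have hprodnull : ∀ (κ : Measure X) [IsProbabilityMeasure κ], κ Sᶜ = 0 →
      (κ.prod ρ) (S ×ˢ T')ᶜ = 0 := by
    intro κ _ hκ
    have hsub : (S ×ˢ T')ᶜ ⊆ (Sᶜ ×ˢ (Set.univ : Set (Fin n → X))) ∪ ((Set.univ : Set X) ×ˢ T'ᶜ) := by
      rintro ⟨x, y⟩ hw
      simp only [Set.mem_compl_iff, Set.mem_prod, not_and_or] at hw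
      rcases hw with hw | hw
      · exact Or.inl ⟨hw, Set.mem_univ _⟩
      · exact Or.inr ⟨Set.mem_univ _, hw⟩
    refine measure_mono_null hsub (measure_union_null ?_ ?_)
    · rw [Measure.prod_prod, hκ, zero_mul]
    · rw [Measure.prod_prod, hT'null, mul_zero]
  have hHmeas : Measurable H := by
    have : Measurable (h ∘ e.symm) := hmeas.comp e.symm.measurable
    exact this
  have hInt : ∀ (κ : Measure X) [IsProbabilityMeasure κ], κ Sᶜ = 0 →
      Integrable H (κ.prod ρ) := by
    intro κ _ hκ
    have hae : ∀ᵐ w ∂(κ.prod ρ), w ∈ S ×ˢ T' := mem_ae_iff.2 (hprodnull κ hκ)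
    refine Integrable.mono' (integrable_const M) hHmeas.aestronglyMeasurable ?_
    filter_upwards [hae] with w hw using hb w hw
  set G : X → ℝ := fun x => ∫ y, H (x, y) ∂ρ with hGdef
  have h1 : ∫ w, H w ∂((σ j).prod ρ) = ∫ x, G x ∂(σ j) := integral_prod H (hInt _ (hσS j))
  have h2 : ∫ w, H w ∂((τ j).prod ρ) = ∫ x, G x ∂(τ j) := integral_prod H (hInt _ (hτS j))
  have hsliceInt : ∀ x ∈ S, Integrable (fun y => H (x, y)) ρ := by
    intro x hx
    refine Integrable.mono' (integrable_const M)
      ((hHmeas.comp measurable_prodMk_left).aestronglyMeasurable) ?_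
    filter_upwards [haeT'] with y hy using hb (x, y) ⟨hx, hy⟩
  have hGlip : LipschitzOnWith (a j).toNNReal G S := by
    rw [lipschitzOnWith_iff_dist_le_mul]
    intro x hx x' hx'
    rw [Real.dist_eq, Real.coe_toNNReal _ (ha j)]
    have hsub : G x - G x' = ∫ y, (H (x, y) - H (x', y)) ∂ρ :=
      (integral_sub (hsliceInt x hx) (hsliceInt x' hx')).symm
    rw [hGdef]
    simp only
    rw [hsub]
    have hbound : ∀ᵐ y ∂ρ, ‖H (x, y) - H (x', y)‖ ≤ a j * dist x x' := by
      filter_upwards [haeT'] with y hy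
      rw [hHdef]
      simp only
      rw [hhF _ (hmemT x hx y hy), hhF _ (hmemT x' hx' y hy)]
      set z1 : Fin (n+1) → X := j.insertNth x y with hz1
      set z2 : Fin (n+1) → X := j.insertNth x' y with hz2
      have hlf : dist (f (φ z1)) (f (φ z2)) ≤ 1 * dist (φ z1) (φ z2) := hf.dist_le_mul _ _
      rw [Real.dist_eq] at hlf
      have hsum : ∑ i, a i * dist (z1 i) (z2 i) = a j * dist x x' := by
        rw [Fin.sum_univ_succAbove _ j, hz1, hz2]
        simp [Fin.insertNth_apply_same, Fin.insertNth_apply_succAbove]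
      calc ‖f (φ z1) - f (φ z2)‖
          ≤ dist (φ z1) (φ z2) := by
            rw [Real.norm_eq_abs]; linarith [hlf, NNReal.coe_one]
        _ ≤ ∑ i, a i * dist (z1 i) (z2 i) := hφ _ _
        _ = a j * dist x x' := hsum
    have := norm_integral_le_of_norm_le (μ := ρ) (integrable_const (a j * dist x x')) hbound
    simpa [measure_univ] using this
  obtain ⟨G', hG'lip, hGG'⟩ := hGlip.extend_real
  have hcongr : ∀ (κ : Measure X), κ Sᶜ = 0 → ∫ x, G x ∂κ = ∫ x, G' x ∂κ := by
    intro κ hκ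
    refine integral_congr_ae ?_
    have : ∀ᵐ x ∂κ, x ∈ S := mem_ae_iff.2 (by simpa using hκ)
    filter_upwards [this] with x hx using hGG' hx
  rw [hIσ, hIτ, h1, h2, hcongr _ (hσS j), hcongr _ (hτS j)]
  exact abs_integral_sub_le_mul_dMK (σ j) (τ j) hS (hσS j) hS (hτS j) (ha j) hG'lip

end Key

/-- For an `(a_0, ..., a_{m-1})`-contraction `φ : Xᵐ → X`, a 1-Lipschitz
`f : X → ℝ` and compactly supported probability measures, the integrals of
`f ∘ φ` against the product measures differ by at most
`Σ aᵢ · d_MK(μᵢ, νᵢ)`. -/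
theorem stmt8 {X : Type*} [MetricSpace X] [MeasurableSpace X] [BorelSpace X]
    {m : ℕ} (hm : 1 ≤ m)
    (φ : (Fin m → X) → X) (a : Fin m → ℝ) (ha : ∀ i, 0 ≤ a i)
    (hφ : ∀ x y : Fin m → X, dist (φ x) (φ y) ≤ ∑ i, a i * dist (x i) (y i))
    (f : X → ℝ) (hf : LipschitzWith 1 f)
    (μ ν : Fin m → Measure X)
    [∀ i, IsProbabilityMeasure (μ i)] [∀ i, IsProbabilityMeasure (ν i)]
    (hμ : ∀ i, ∃ K : Set X, IsCompact K ∧ μ i Kᶜ = 0)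
    (hν : ∀ i, ∃ K : Set X, IsCompact K ∧ ν i Kᶜ = 0) :
    |∫ z, f (φ z) ∂(Measure.pi μ) - ∫ z, f (φ z) ∂(Measure.pi ν)|
      ≤ ∑ i, a i * dMK (μ i) (ν i) := by
  classical
  obtain ⟨n, rfl⟩ : ∃ n, m = n + 1 := ⟨m - 1, (Nat.succ_pred_eq_of_pos hm).symm⟩
  choose K hKc hKn using hμ
  choose L hLc hLn using hν
  haveI : Nonempty X := by
    by_contra hne
    rw [not_nonempty_iff] at hne
    have h1 := measure_univ (μ := μ 0)
    rw [Set.univ_eq_empty_iff.2 hne, measure_empty] at h1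
    exact zero_ne_one h1
  obtain ⟨x₀⟩ := (inferInstance : Nonempty X)
  set S : Set X := (⋃ i, (K i ∪ L i)) ∪ {x₀} with hSdef
  have hS : IsCompact S :=
    (isCompact_iUnion fun i => (hKc i).union (hLc i)).union isCompact_singleton
  have hμS : ∀ i, μ i Sᶜ = 0 := by
    intro i
    refine measure_mono_null (Set.compl_subset_compl.2 ?_) (hKn i)
    exact ((Set.subset_union_left).trans (Set.subset_iUnion (fun i => K i ∪ L i) i)).trans
      Set.subset_union_left
  have hνS : ∀ i, ν i Sᶜ = 0 := by
    intro i
    refine measure_mono_null (Set.compl_subset_compl.2 ?_) (hLn i)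
    exact ((Set.subset_union_right).trans (Set.subset_iUnion (fun i => K i ∪ L i) i)).trans
      Set.subset_union_left
  -- the compact product set
  set T : Set (Fin (n+1) → X) := Set.pi Set.univ (fun _ => S) with hTdef
  have hT : IsCompact T := isCompact_univ_pi fun _ => hS
  -- the Lipschitz-type estimate for f ∘ φ
  have hFlip : ∀ z w : Fin (n+1) → X,
      |f (φ z) - f (φ w)| ≤ ∑ i, a i * dist (z i) (w i) := by
    intro z w
    have h1 : dist (f (φ z)) (f (φ w)) ≤ 1 * dist (φ z) (φ w) := hf.dist_le_mul _ _
    rw [Real.dist_eq] at h1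
    calc |f (φ z) - f (φ w)| ≤ dist (φ z) (φ w) := by
          linarith [h1, NNReal.coe_one]
      _ ≤ ∑ i, a i * dist (z i) (w i) := hφ z w
  set A : ℝ := ∑ i, a i with hAdef
  have hA : 0 ≤ A := Finset.sum_nonneg fun i _ => ha i
  -- a countable set whose closure contains T
  obtain ⟨c0, hc0, hTc0⟩ := hT.isSeparable
  set z₀ : Fin (n+1) → X := fun _ => x₀ with hz₀def
  obtain ⟨D, hD⟩ := (hc0.insert z₀).exists_eq_range (Set.insert_nonempty _ _)
  have hTD : T ⊆ closure (Set.range D) := by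
    rw [← hD]
    exact hTc0.trans (closure_mono (Set.subset_insert _ _))
  -- the measurable substitute for f ∘ φ
  set h : (Fin (n+1) → X) → ℝ :=
    fun z => ⨅ k : ℕ, (f (φ (D k)) + ∑ i, a i * dist (z i) (D k i)) with hhdef
  have hmeas : Measurable h := by
    refine Measurable.iInf fun k => ?_
    refine Measurable.add measurable_const ?_
    refine Finset.measurable_sum _ fun i _ => ?_
    exact (((Continuous.dist continuous_id continuous_const).measurable).comp
      (measurable_pi_apply i)).const_mul (a i)
  have hlow : ∀ z (k : ℕ), f (φ z) ≤ f (φ (D k)) + ∑ i, a i * dist (z i) (D k i) := by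
    intro z k
    have h1 := hFlip z (D k)
    have h2 := (abs_le.mp h1).2
    linarith
  have hbdd : ∀ z : Fin (n+1) → X, BddBelow (Set.range fun k : ℕ =>
      f (φ (D k)) + ∑ i, a i * dist (z i) (D k i)) := by
    intro z
    refine ⟨f (φ z), ?_⟩
    rintro _ ⟨k, rfl⟩
    exact hlow z k
  have hhT : ∀ z ∈ T, h z = f (φ z) := by
    intro z hz
    refine le_antisymm ?_ (le_ciInf (hlow z))
    have hub : ∀ ε > (0:ℝ), h z ≤ f (φ z) + ε := by
      intro ε hε
      obtain ⟨k, hk⟩ := Metric.mem_closure_range_iff.1 (hTD hz) (ε / (2 * A + 1)) (by positivity)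
      have h1 : h z ≤ f (φ (D k)) + ∑ i, a i * dist (z i) (D k i) := ciInf_le (hbdd z) k
      have h2 : -(∑ i, a i * dist (z i) (D k i)) ≤ f (φ z) - f (φ (D k)) :=
        (abs_le.mp (hFlip z (D k))).1
      have h3 : ∑ i, a i * dist (z i) (D k i) ≤ A * dist z (D k) := by
        rw [hAdef, Finset.sum_mul]
        exact Finset.sum_le_sum fun i _ =>
          mul_le_mul_of_nonneg_left (dist_le_pi_dist z (D k) i) (ha i)
      have h4 : A * dist z (D k) ≤ A * (ε / (2 * A + 1)) :=
        mul_le_mul_of_nonneg_left hk.le hA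
      have h5 : 2 * (A * (ε / (2 * A + 1))) ≤ ε := by
        have hpos : (0:ℝ) < 2 * A + 1 := by linarith
        rw [show 2 * (A * (ε / (2 * A + 1))) = 2 * A * ε / (2 * A + 1) by ring,
          div_le_iff₀ hpos]
        nlinarith [mul_nonneg hA hε.le]
      linarith
    by_contra hlt
    push_neg at hlt
    have := hub ((h z - f (φ z)) / 2) (by linarith)
    linarith
  -- replace f ∘ φ by h in the integrals
  have hTnull : ∀ (σ : Fin (n+1) → Measure X) [∀ i, IsProbabilityMeasure (σ i)],
      (∀ i, σ i Sᶜ = 0) → Measure.pi σ Tᶜ = 0 := by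
    intro σ _ hσ
    have hsub : Tᶜ ⊆ ⋃ i : Fin (n+1), (fun z : Fin (n+1) → X => z i) ⁻¹' Sᶜ := by
      intro z hz
      simp only [hTdef, Set.mem_compl_iff, Set.mem_pi, Set.mem_univ, forall_true_left,
        not_forall] at hz
      obtain ⟨i, hi⟩ := hz
      exact Set.mem_iUnion.2 ⟨i, hi⟩
    refine measure_mono_null hsub (measure_iUnion_null fun i => ?_)
    exact Measure.pi_eval_preimage_null _ (hσ i)
  have hIcongr : ∀ (σ : Fin (n+1) → Measure X) [∀ i, IsProbabilityMeasure (σ i)],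
      (∀ i, σ i Sᶜ = 0) → ∫ z, f (φ z) ∂Measure.pi σ = ∫ z, h z ∂Measure.pi σ := by
    intro σ _ hσ
    refine integral_congr_ae ?_
    have : ∀ᵐ z ∂Measure.pi σ, z ∈ T := mem_ae_iff.2 (by simpa using hTnull σ hσ)
    filter_upwards [this] with z hz using (hhT z hz).symm
  rw [hIcongr μ hμS, hIcongr ν hνS]
  -- hybrid measures
  set hyb : ℕ → Fin (n+1) → Measure X := fun N i => if (i : ℕ) < N then ν i else μ i
    with hhybdef
  have hprob : ∀ (N : ℕ) (i : Fin (n+1)), IsProbabilityMeasure (hyb N i) := by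
    intro N i
    rw [hhybdef]
    dsimp only
    split <;> infer_instance
  have hhybS : ∀ (N : ℕ) (i : Fin (n+1)), hyb N i Sᶜ = 0 := by
    intro N i
    rw [hhybdef]
    dsimp only
    split
    · exact hνS i
    · exact hμS i
  -- the one-step estimate
  have hstep : ∀ (N : ℕ) (hN : N < n + 1),
      |(∫ z, h z ∂Measure.pi (hyb N)) - ∫ z, h z ∂Measure.pi (hyb (N+1))|
        ≤ a ⟨N, hN⟩ * dMK (μ ⟨N, hN⟩) (ν ⟨N, hN⟩) := by
    intro N hN
    haveI := fun i => hprob N i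
    haveI := fun i => hprob (N+1) i
    set j : Fin (n+1) := ⟨N, hN⟩ with hjdef
    have hagree : ∀ i, i ≠ j → hyb N i = hyb (N+1) i := by
      intro i hij
      have hine : (i : ℕ) ≠ N := fun hh => hij (Fin.ext hh)
      rw [hhybdef]
      dsimp only
      by_cases h1 : (i : ℕ) < N
      · rw [if_pos h1, if_pos (Nat.lt_succ_of_lt h1)]
      · rw [if_neg h1, if_neg (by omega)]
    have hj1 : hyb N j = μ j := by
      rw [hhybdef]; dsimp only; rw [if_neg (by simp [hjdef])]
    have hj2 : hyb (N+1) j = ν j := by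
      rw [hhybdef]; dsimp only; rw [if_pos (by simp [hjdef])]
    have := key_step φ a ha hφ f hf hS hmeas hhT (hyb N) (hyb (N+1))
      (hhybS N) (hhybS (N+1)) j hagree
    rw [hj1, hj2] at this
    exact this
  -- telescoping
  set g : ℕ → ℝ := fun k =>
    if hk : k < n + 1 then a ⟨k, hk⟩ * dMK (μ ⟨k, hk⟩) (ν ⟨k, hk⟩) else 0 with hgdef
  have htel : ∀ N : ℕ, N ≤ n + 1 →
      |(∫ z, h z ∂Measure.pi (hyb 0)) - ∫ z, h z ∂Measure.pi (hyb N)|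
        ≤ ∑ k ∈ Finset.range N, g k := by
    intro N
    induction N with
    | zero => intro _; simp
    | succ N ih =>
      intro hN
      have hN' : N < n + 1 := hN
      have h1 := ih (Nat.le_of_lt hN')
      have h2 := hstep N hN'
      have h3 : g N = a ⟨N, hN'⟩ * dMK (μ ⟨N, hN'⟩) (ν ⟨N, hN'⟩) := by
        rw [hgdef]; dsimp only; rw [dif_pos hN']
      calc |(∫ z, h z ∂Measure.pi (hyb 0)) - ∫ z, h z ∂Measure.pi (hyb (N+1))|
          ≤ |(∫ z, h z ∂Measure.pi (hyb 0)) - ∫ z, h z ∂Measure.pi (hyb N)|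
            + |(∫ z, h z ∂Measure.pi (hyb N)) - ∫ z, h z ∂Measure.pi (hyb (N+1))| :=
            abs_sub_le _ _ _
        _ ≤ (∑ k ∈ Finset.range N, g k) + a ⟨N, hN'⟩ * dMK (μ ⟨N, hN'⟩) (ν ⟨N, hN'⟩) :=
            add_le_add h1 h2
        _ = ∑ k ∈ Finset.range (N+1), g k := by rw [Finset.sum_range_succ, h3]
  have hfinal := htel (n+1) le_rfl
  have hhyb0 : hyb 0 = μ := by
    funext i
    rw [hhybdef]; dsimp only; rw [if_neg (Nat.not_lt_zero _)]
  have hhybm : hyb (n+1) = ν := by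
    funext i
    rw [hhybdef]; dsimp only; rw [if_pos i.isLt]
  rw [hhyb0, hhybm] at hfinal
  refine hfinal.trans ?_
  rw [show (∑ i : Fin (n+1), a i * dMK (μ i) (ν i)) = ∑ k ∈ Finset.range (n+1), g k from ?_]
  · rw [← Fin.sum_univ_eq_sum_range g (n+1)]
    refine Finset.sum_congr rfl fun i _ => ?_
    rw [hgdef]; dsimp only; rw [dif_pos i.isLt]
end

section
/- Let (X,d) be a metric space and let S = (X,(φ_j)_{j=1}^L,(p_j)_{j=1}^L) be a GIFS with probabilities of order m in which each φ_j is an (a_0,...,a_{m−1})-contraction with Σ_{i=0}^{m−1} a_i < 1. Then the diagonal Markov operator M̄_S(μ) := M_S(μ, ..., μ) is a Banach contraction on compactly supported Borel probability measures with respect to d_MK, with Lipschitz constant at most Σ_{i=0}^{m−1} a_i: d_MK(M̄_S(μ), M̄_S(ν)) ≤ (Σ_{i=0}^{m−1} a_i) · d_MK(μ, ν). -/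
open MeasureTheory

set_option maxHeartbeats 1000000
set_option linter.unusedSectionVars false
set_option linter.unusedVariables false

section Aux

lemma ae_mem_of_compl_null {X : Type*} [MeasurableSpace X] {μ : Measure X} {K : Set X}
    (h : μ Kᶜ = 0) : ∀ᵐ x ∂μ, x ∈ K := mem_ae_iff.2 h

lemma K_nonempty {X : Type*} [MeasurableSpace X] {μ : Measure X} [IsProbabilityMeasure μ]
    {K : Set X} (h : μ Kᶜ = 0) : K.Nonempty := by
  by_contra hc
  rw [Set.not_nonempty_iff_eq_empty] at hc
  rw [hc, Set.compl_empty] at h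
  exact (one_ne_zero (measure_univ (μ := μ) ▸ h))

variable {X : Type*} [MetricSpace X] [MeasurableSpace X] [BorelSpace X]
  {μ ν : Measure X} [IsProbabilityMeasure μ] [IsProbabilityMeasure ν]
  {K : Set X}

lemma integrable_lipschitz (hK : IsCompact K) (hμK : μ Kᶜ = 0)
    {c : NNReal} {f : X → ℝ} (hf : LipschitzWith c f) : Integrable f μ := by
  obtain ⟨x₀, _⟩ := K_nonempty hμK
  obtain ⟨R, hR⟩ := hK.isBounded.subset_closedBall x₀
  refine (integrable_const (|f x₀| + c * R)).mono'
    hf.continuous.aestronglyMeasurable ?_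
  filter_upwards [ae_mem_of_compl_null hμK] with x hx
  have h1 : dist (f x) (f x₀) ≤ c * dist x x₀ := hf.dist_le_mul x x₀
  have h2 : dist x x₀ ≤ R := by simpa [Metric.mem_closedBall] using hR hx
  have : |f x - f x₀| ≤ c * R := by
    rw [Real.dist_eq] at h1
    calc |f x - f x₀| ≤ c * dist x x₀ := h1
    _ ≤ c * R := by gcongr
  calc ‖f x‖ = |f x - f x₀ + f x₀| := by rw [Real.norm_eq_abs]; ring_nf
  _ ≤ |f x - f x₀| + |f x₀| := abs_add_le _ _
  _ ≤ c * R + |f x₀| := by linarith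
  _ = |f x₀| + c * R := by ring

lemma dMK_bddAbove (hK : IsCompact K) (hμK : μ Kᶜ = 0) (hνK : ν Kᶜ = 0) :
    BddAbove {s : ℝ | ∃ f : X → ℝ, LipschitzWith 1 f ∧
      s = |∫ x, f x ∂μ - ∫ x, f x ∂ν|} := by
  obtain ⟨x₀, _⟩ := K_nonempty hμK
  obtain ⟨R, hR⟩ := hK.isBounded.subset_closedBall x₀
  have hR0 : 0 ≤ R := by
    have := hR ‹x₀ ∈ K›
    simpa [Metric.mem_closedBall] using (dist_nonneg.trans this)
  refine ⟨2 * R, ?_⟩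
  rintro s ⟨f, hf, rfl⟩
  have hint : ∀ (ρ : Measure X), IsProbabilityMeasure ρ → ρ Kᶜ = 0 →
      |∫ x, f x ∂ρ - f x₀| ≤ R := by
    intro ρ hρ hρK
    have hfi : Integrable f ρ := integrable_lipschitz hK hρK hf
    have : ∫ x, f x ∂ρ - f x₀ = ∫ x, (f x - f x₀) ∂ρ := by
      rw [integral_sub hfi (integrable_const _), integral_const]
      simp
    rw [this, ← Real.norm_eq_abs]
    have := norm_integral_le_of_norm_le_const (μ := ρ) (f := fun x => f x - f x₀) (C := R) ?_
    · simpa using this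
    · filter_upwards [ae_mem_of_compl_null hρK] with x hx
      have h1 : dist (f x) (f x₀) ≤ 1 * dist x x₀ := hf.dist_le_mul x x₀
      have h2 : dist x x₀ ≤ R := by simpa [Metric.mem_closedBall] using hR hx
      rw [Real.dist_eq, one_mul] at h1
      simpa [Real.norm_eq_abs] using h1.trans h2
  calc |∫ x, f x ∂μ - ∫ x, f x ∂ν|
      = |(∫ x, f x ∂μ - f x₀) - (∫ x, f x ∂ν - f x₀)| := by ring_nf
    _ ≤ |∫ x, f x ∂μ - f x₀| + |∫ x, f x ∂ν - f x₀| := abs_sub _ _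
    _ ≤ R + R := add_le_add (hint μ ‹_› hμK) (hint ν ‹_› hνK)
    _ = 2 * R := by ring

lemma le_dMK (hK : IsCompact K) (hμK : μ Kᶜ = 0) (hνK : ν Kᶜ = 0)
    {f : X → ℝ} (hf : LipschitzWith 1 f) :
    |∫ x, f x ∂μ - ∫ x, f x ∂ν| ≤ dMK μ ν :=
  le_csSup (dMK_bddAbove hK hμK hνK) ⟨f, hf, rfl⟩

lemma dMK_nonneg_s10 (hK : IsCompact K) (hμK : μ Kᶜ = 0) (hνK : ν Kᶜ = 0) :
    0 ≤ dMK μ ν := by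
  have := le_dMK hK hμK hνK (f := fun _ => 0)
    (LipschitzWith.const' 0 |>.weaken zero_le_one)
  simpa using this

lemma dMK_scaled (hK : IsCompact K) (hμK : μ Kᶜ = 0) (hνK : ν Kᶜ = 0)
    {c : ℝ} (hc : 0 ≤ c) {g : X → ℝ} (hg : ∀ x y, dist (g x) (g y) ≤ c * dist x y) :
    |∫ x, g x ∂μ - ∫ x, g x ∂ν| ≤ c * dMK μ ν := by
  obtain ⟨x₀, _⟩ := K_nonempty hμK
  rcases eq_or_lt_of_le hc with hc0 | hcpos
  · have hgc : ∀ x, g x = g x₀ := by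
      intro x
      have := hg x x₀
      rw [← hc0, zero_mul] at this
      have := le_antisymm this dist_nonneg
      rwa [dist_eq_zero] at this
    have : (fun x => g x) = fun _ => g x₀ := funext hgc
    rw [this]
    simp [integral_const, ← hc0]
  · set f : X → ℝ := fun x => c⁻¹ * g x with hfdef
    have hf : LipschitzWith 1 f := by
      apply LipschitzWith.of_dist_le_mul
      intro x y
      rw [hfdef]
      simp only [Real.dist_eq, NNReal.coe_one, one_mul]
      rw [← mul_sub, abs_mul, abs_of_pos (inv_pos.2 hcpos)]
      calc c⁻¹ * |g x - g y| ≤ c⁻¹ * (c * dist x y) := by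
            have := hg x y
            rw [Real.dist_eq] at this
            gcongr
        _ = dist x y := by field_simp
    have hle := le_dMK hK hμK hνK hf
    have hμi : ∫ x, f x ∂μ = c⁻¹ * ∫ x, g x ∂μ := integral_const_mul _ _
    have hνi : ∫ x, f x ∂ν = c⁻¹ * ∫ x, g x ∂ν := integral_const_mul _ _
    rw [hμi, hνi, ← mul_sub, abs_mul, abs_of_pos (inv_pos.2 hcpos)] at hle
    calc |∫ x, g x ∂μ - ∫ x, g x ∂ν|
        = c * (c⁻¹ * |∫ x, g x ∂μ - ∫ x, g x ∂ν|) := by field_simp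
      _ ≤ c * dMK μ ν := by gcongr

end Aux

lemma fubini_step {Y : Type*} [MetricSpace Y] [CompactSpace Y] [MeasurableSpace Y]
    [BorelSpace Y] [SecondCountableTopology Y]
    {n : ℕ} (α β : Measure Y) [IsProbabilityMeasure α] [IsProbabilityMeasure β]
    (τ : Measure (Fin n → Y)) [IsProbabilityMeasure τ]
    (kf : Fin (n + 1))
    (g : (Fin (n + 1) → Y) → ℝ) (hg : Continuous g)
    {c : ℝ} (hc : 0 ≤ c)
    (hgl : ∀ (x x' : Y) (y : Fin n → Y),
      dist (g (kf.insertNth x y)) (g (kf.insertNth x' y)) ≤ c * dist x x')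
    (D : ℝ)
    (key1 : ∀ w : Y → ℝ, (∀ x y, dist (w x) (w y) ≤ c * dist x y) →
      |∫ y, w y ∂α - ∫ y, w y ∂β| ≤ c * D) :
    |∫ z, g ((MeasurableEquiv.piFinSuccAbove (fun _ : Fin (n + 1) => Y) kf).symm z)
        ∂(α.prod τ) -
      ∫ z, g ((MeasurableEquiv.piFinSuccAbove (fun _ : Fin (n + 1) => Y) kf).symm z)
        ∂(β.prod τ)| ≤ c * D := by
  obtain ⟨C, hC⟩ := isCompact_univ.exists_bound_of_continuousOn hg.continuousOn
  have hCb : ∀ x, ‖g x‖ ≤ C := fun x => hC x trivial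
  set e := MeasurableEquiv.piFinSuccAbove (fun _ : Fin (n + 1) => Y) kf with he
  set h : Y × (Fin n → Y) → ℝ := fun z => g (e.symm z) with hh
  have hhm : Measurable h := hg.measurable.comp e.symm.measurable
  have hint : ∀ (ρ₀ : Measure (Y × (Fin n → Y))), IsProbabilityMeasure ρ₀ →
      Integrable h ρ₀ := fun ρ₀ _ =>
    (integrable_const C).mono' hhm.aestronglyMeasurable
      (Filter.Eventually.of_forall fun z => hCb _)
  have hesymm : ∀ (x : Y) (y : Fin n → Y), e.symm (x, y) = kf.insertNth x y := by
    intro x y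
    rw [he]
    simp [MeasurableEquiv.piFinSuccAbove, Fin.insertNthEquiv]
  have hslice : ∀ x : Y, Integrable (fun y => h (x, y)) τ := by
    intro x
    refine (integrable_const C).mono'
      ((hhm.comp measurable_prodMk_left).aestronglyMeasurable) ?_
    exact Filter.Eventually.of_forall fun y => hCb _
  set w : Y → ℝ := fun x => ∫ y, h (x, y) ∂τ with hw
  have hwl : ∀ x x' : Y, dist (w x) (w x') ≤ c * dist x x' := by
    intro x x'
    rw [hw, Real.dist_eq]
    simp only []
    rw [← integral_sub (hslice x) (hslice x'), ← Real.norm_eq_abs]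
    have hb : ∀ y : Fin n → Y, ‖h (x, y) - h (x', y)‖ ≤ c * dist x x' := by
      intro y
      rw [hh]
      simp only [Real.norm_eq_abs]
      rw [hesymm, hesymm, ← Real.dist_eq]
      exact hgl x x' y
    have := norm_integral_le_of_norm_le_const (μ := τ)
      (f := fun y => h (x, y) - h (x', y)) (C := c * dist x x')
      (Filter.Eventually.of_forall hb)
    simpa using this
  have hα : ∫ z, h z ∂(α.prod τ) = ∫ x, w x ∂α := integral_prod h (hint _ inferInstance)
  have hβ : ∫ z, h z ∂(β.prod τ) = ∫ x, w x ∂β := integral_prod h (hint _ inferInstance)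
  calc |∫ z, g (e.symm z) ∂(α.prod τ) - ∫ z, g (e.symm z) ∂(β.prod τ)|
      = |∫ x, w x ∂α - ∫ x, w x ∂β| := by rw [← hα, ← hβ]
    _ ≤ c * D := key1 w hwl

lemma key_hybrid {Y : Type*} [MetricSpace Y] [CompactSpace Y] [MeasurableSpace Y]
    [BorelSpace Y] [SecondCountableTopology Y]
    {n : ℕ} (μ' ν' : Measure Y) [IsProbabilityMeasure μ'] [IsProbabilityMeasure ν']
    (a : Fin (n + 1) → ℝ) (ha : ∀ i, 0 ≤ a i)
    (g : (Fin (n + 1) → Y) → ℝ) (hg : Continuous g)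
    (hgl : ∀ x y : Fin (n + 1) → Y, dist (g x) (g y) ≤ ∑ i, a i * dist (x i) (y i))
    (D : ℝ)
    (key1 : ∀ c : ℝ, 0 ≤ c → ∀ w : Y → ℝ,
      (∀ x y, dist (w x) (w y) ≤ c * dist x y) →
      |∫ y, w y ∂μ' - ∫ y, w y ∂ν'| ≤ c * D) :
    |∫ x, g x ∂(Measure.pi fun _ : Fin (n + 1) => μ') -
      ∫ x, g x ∂(Measure.pi fun _ : Fin (n + 1) => ν')| ≤ (∑ i, a i) * D := by
  classical
  set ρ : ℕ → Measure (Fin (n + 1) → Y) :=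
    fun k => Measure.pi fun i => if (i : ℕ) < k then ν' else μ' with hρ
  have hprob : ∀ (k : ℕ) (i : Fin (n + 1)),
      IsProbabilityMeasure (if (i : ℕ) < k then ν' else μ') := by
    intro k i; split <;> infer_instance
  haveI : ∀ (k : ℕ), IsProbabilityMeasure (ρ k) := by
    intro k
    haveI := hprob k
    rw [hρ]
    infer_instance
  set F : ℕ → ℝ := fun k => ∫ x, g x ∂(ρ k) with hF
  have hρ0 : ρ 0 = Measure.pi fun _ : Fin (n + 1) => μ' := by
    show (Measure.pi fun i : Fin (n + 1) => if (i : ℕ) < 0 then ν' else μ') = _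
    congr 1
  have hρlast : ρ (n + 1) = Measure.pi fun _ : Fin (n + 1) => ν' := by
    show (Measure.pi fun i : Fin (n + 1) => if (i : ℕ) < n + 1 then ν' else μ') = _
    congr 1
    funext i
    rw [if_pos i.isLt]
  have hstep : ∀ kf : Fin (n + 1), |F ((kf : ℕ) + 1) - F (kf : ℕ)| ≤ a kf * D := by
    intro kf
    set k : ℕ := (kf : ℕ) with hk
    haveI : ∀ i, IsProbabilityMeasure
        ((fun i : Fin (n + 1) => if (i : ℕ) < k then ν' else μ') i) := hprob k
    set τ : Measure (Fin n → Y) :=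
      Measure.pi fun j => if ((kf.succAbove j : Fin (n + 1)) : ℕ) < k then ν' else μ'
      with hτ
    haveI : IsProbabilityMeasure τ := by
      haveI : ∀ j : Fin n, IsProbabilityMeasure
          (if ((kf.succAbove j : Fin (n + 1)) : ℕ) < k then ν' else μ') := by
        intro j; split <;> infer_instance
      rw [hτ]; infer_instance
    set e := MeasurableEquiv.piFinSuccAbove (fun _ : Fin (n + 1) => Y) kf with he
    have h1 : MeasurePreserving e (ρ k) (μ'.prod τ) := by
      have h := measurePreserving_piFinSuccAbove
        (fun i : Fin (n + 1) => if (i : ℕ) < k then ν' else μ') kf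
      have hkk : (if (kf : ℕ) < k then ν' else μ') = μ' := if_neg (by omega)
      rwa [hkk] at h
    have h2 : MeasurePreserving e (ρ (k + 1)) (ν'.prod τ) := by
      have h := measurePreserving_piFinSuccAbove
        (fun i : Fin (n + 1) => if (i : ℕ) < k + 1 then ν' else μ') kf
      have hkk : (if (kf : ℕ) < k + 1 then ν' else μ') = ν' := if_pos (by omega)
      have htail : (Measure.pi fun j : Fin n =>
          if ((kf.succAbove j : Fin (n + 1)) : ℕ) < k + 1 then ν' else μ') = τ := by
        rw [hτ]
        congr 1
        funext j
        have hne : ((kf.succAbove j : Fin (n + 1)) : ℕ) ≠ k := by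
          intro hc
          exact Fin.succAbove_ne kf j (Fin.val_injective hc)
        by_cases hlt : ((kf.succAbove j : Fin (n + 1)) : ℕ) < k
        · rw [if_pos (by omega : ((kf.succAbove j : Fin (n + 1)) : ℕ) < k + 1), if_pos hlt]
        · rw [if_neg (by omega : ¬ ((kf.succAbove j : Fin (n + 1)) : ℕ) < k + 1), if_neg hlt]
      rwa [hkk, htail] at h
    have hEk : F k = ∫ z, g (e.symm z) ∂(μ'.prod τ) := by
      have hcomp := h1.integral_comp e.measurableEmbedding (fun z => g (e.symm z))
      rw [hF]
      simp only []
      rw [← hcomp]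
      refine integral_congr_ae (Filter.Eventually.of_forall fun x => ?_)
      simp
    have hEk1 : F (k + 1) = ∫ z, g (e.symm z) ∂(ν'.prod τ) := by
      have hcomp := h2.integral_comp e.measurableEmbedding (fun z => g (e.symm z))
      rw [hF]
      simp only []
      rw [← hcomp]
      refine integral_congr_ae (Filter.Eventually.of_forall fun x => ?_)
      simp
    have hgl' : ∀ (x x' : Y) (y : Fin n → Y),
        dist (g (kf.insertNth x y)) (g (kf.insertNth x' y)) ≤ a kf * dist x x' := by
      intro x x' y
      set z : Fin (n + 1) → Y := kf.insertNth x y with hz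
      set z' : Fin (n + 1) → Y := kf.insertNth x' y with hz'
      have hA := hgl z z'
      have hB : ∑ i, a i * dist (z i) (z' i) = a kf * dist x x' := by
        rw [Fin.sum_univ_succAbove (fun i => a i * dist (z i) (z' i)) kf]
        rw [hz, hz']
        simp
      rw [hB] at hA
      exact hA
    have := fubini_step μ' ν' τ kf g hg (ha kf) hgl' D (key1 (a kf) (ha kf))
    rw [hEk, hEk1, abs_sub_comm]
    exact this
  have htel : F (n + 1) - F 0 = ∑ k ∈ Finset.range (n + 1), (F (k + 1) - F k) :=
    (Finset.sum_range_sub F (n + 1)).symm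
  have habs : |F 0 - F (n + 1)| ≤ ∑ k ∈ Finset.range (n + 1), |F (k + 1) - F k| := by
    rw [abs_sub_comm, htel]
    exact Finset.abs_sum_le_sum_abs _ _
  have hsum : ∑ k ∈ Finset.range (n + 1), |F (k + 1) - F k| ≤ (∑ i, a i) * D := by
    rw [Finset.sum_mul,
      ← Fin.sum_univ_eq_sum_range (fun k => |F (k + 1) - F k|) (n + 1)]
    exact Finset.sum_le_sum fun i _ => hstep i
  calc |∫ x, g x ∂(Measure.pi fun _ : Fin (n + 1) => μ') -
      ∫ x, g x ∂(Measure.pi fun _ : Fin (n + 1) => ν')|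
      = |F 0 - F (n + 1)| := by rw [hF]; simp only []; rw [hρ0, hρlast]
    _ ≤ ∑ k ∈ Finset.range (n + 1), |F (k + 1) - F k| := habs
    _ ≤ (∑ i, a i) * D := hsum

/-- If a GIFS with probabilities consists of `(a_0, ..., a_{m-1})`-contractions
with `Σ aᵢ < 1`, then the diagonal Markov operator `μ ↦ M_S(μ, ..., μ)` is a
Banach contraction with constant at most `Σ aᵢ` for the Monge–Kantorovich
metric. -/
theorem stmt10 {X : Type*} [MetricSpace X] [MeasurableSpace X] [BorelSpace X]
    {m L : ℕ} (hm : 1 ≤ m) (hL : 0 < L)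
    (φ : Fin L → (Fin m → X) → X) (hφc : ∀ j, Continuous (φ j))
    (p : Fin L → NNReal) (hp : ∀ j, 0 < p j) (hp1 : ∑ j, p j = 1)
    (a : Fin m → ℝ) (ha : ∀ i, 0 ≤ a i) (ha1 : ∑ i, a i < 1)
    (hφ : ∀ j, ∀ x y : Fin m → X,
      dist (φ j x) (φ j y) ≤ ∑ i, a i * dist (x i) (y i))
    (μ ν : Measure X) [IsProbabilityMeasure μ] [IsProbabilityMeasure ν]
    (hμ : ∃ K : Set X, IsCompact K ∧ μ Kᶜ = 0)
    (hν : ∃ K : Set X, IsCompact K ∧ ν Kᶜ = 0) :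
    dMK (∑ j, p j • (Measure.pi fun _ : Fin m => μ).map (φ j))
        (∑ j, p j • (Measure.pi fun _ : Fin m => ν).map (φ j))
      ≤ (∑ i, a i) * dMK μ ν := by
  classical
  obtain ⟨n, rfl⟩ := Nat.exists_eq_succ_of_ne_zero (by omega : m ≠ 0)
  obtain ⟨K₁, hK₁c, hμK₁⟩ := hμ
  obtain ⟨K₂, hK₂c, hνK₂⟩ := hν
  set K : Set X := K₁ ∪ K₂ with hKdef
  have hKc : IsCompact K := hK₁c.union hK₂c
  have hKcl : IsClosed K := hKc.isClosed
  have hKm : MeasurableSet K := hKcl.measurableSet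
  have hμK : μ Kᶜ = 0 := by
    refine measure_mono_null ?_ hμK₁
    rw [hKdef, Set.compl_union]
    exact Set.inter_subset_left
  have hνK : ν Kᶜ = 0 := by
    refine measure_mono_null ?_ hνK₂
    rw [hKdef, Set.compl_union]
    exact Set.inter_subset_right
  obtain ⟨x₀, hx₀⟩ := K_nonempty hμK
  -- the compact subtype
  haveI : CompactSpace K := isCompact_iff_compactSpace.mp hKc
  have hι : MeasurableEmbedding ((↑) : K → X) :=
    hKcl.isClosedEmbedding_subtypeVal.measurableEmbedding
  set μ' : Measure K := μ.comap (↑) with hμ'def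
  set ν' : Measure K := ν.comap (↑) with hν'def
  have hμ'map : μ'.map (↑) = μ := by
    rw [hμ'def, hι.map_comap, Subtype.range_coe,
      Measure.restrict_eq_self_of_ae_mem (ae_mem_of_compl_null hμK)]
  have hν'map : ν'.map (↑) = ν := by
    rw [hν'def, hι.map_comap, Subtype.range_coe,
      Measure.restrict_eq_self_of_ae_mem (ae_mem_of_compl_null hνK)]
  haveI hμ'p : IsProbabilityMeasure μ' := by
    constructor
    rw [hμ'def, hι.comap_apply, Set.image_univ, Subtype.range_coe]
    exact (prob_compl_eq_zero_iff hKm).1 hμK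
  haveI hν'p : IsProbabilityMeasure ν' := by
    constructor
    rw [hν'def, hι.comap_apply, Set.image_univ, Subtype.range_coe]
    exact (prob_compl_eq_zero_iff hKm).1 hνK
  set ιm : (Fin (n + 1) → K) → (Fin (n + 1) → X) := fun y i => (y i : X) with hιmdef
  have hιmm : Measurable ιm :=
    measurable_pi_iff.2 fun i => hι.measurable.comp (measurable_pi_apply i)
  have hιmc : Continuous ιm :=
    continuous_pi fun i => continuous_subtype_val.comp (continuous_apply i)
  have hpiμ : MeasurePreserving ιm (Measure.pi fun _ : Fin (n + 1) => μ')
      (Measure.pi fun _ : Fin (n + 1) => μ) :=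
    measurePreserving_pi _ _ fun _ => ⟨hι.measurable, hμ'map⟩
  have hpiν : MeasurePreserving ιm (Measure.pi fun _ : Fin (n + 1) => ν')
      (Measure.pi fun _ : Fin (n + 1) => ν) :=
    measurePreserving_pi _ _ fun _ => ⟨hι.measurable, hν'map⟩
  set x₀k : K := ⟨x₀, hx₀⟩ with hx₀k
  set proj : X → K := fun x => if h : x ∈ K then ⟨x, h⟩ else x₀k with hprojdef
  have hproj : Measurable proj := by
    have hcomp : Measurable (((↑) : K → X) ∘ proj) := by
      have : ((↑) : K → X) ∘ proj = fun x => if x ∈ K then x else (x₀k : X) := by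
        funext x
        by_cases h : x ∈ K <;> simp [hprojdef, h]
      rw [this]
      exact Measurable.ite hKm measurable_id measurable_const
    exact hι.measurable_comp_iff.mp hcomp
  have hprojval : ∀ y : K, proj (y : X) = y := by
    intro y
    rw [hprojdef]
    simp only [y.2, dif_pos, Subtype.coe_eta]
  -- S = K^m
  set S : Set (Fin (n + 1) → X) := Set.pi Set.univ fun _ => K with hSdef
  have hSm : MeasurableSet S := MeasurableSet.univ_pi fun _ => hKm
  have hιmS : ∀ y, ιm y ∈ S := by
    intro y
    rw [hSdef]
    intro i _
    exact (y i).2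
  -- transferred maps
  set φ' : Fin L → (Fin (n + 1) → K) → X := fun j y => φ j (ιm y) with hφ'def
  have hφ'c : ∀ j, Continuous (φ' j) := fun j => (hφc j).comp hιmc
  have hφ'm : ∀ j, Measurable (φ' j) := fun j => (hφ'c j).measurable
  -- identification of mapped measures
  have hmap : ∀ (ρ : Measure X) (ρ' : Measure K), IsProbabilityMeasure ρ →
      IsProbabilityMeasure ρ' →
      ρ'.map (↑) = ρ → ∀ j,
      (Measure.pi fun _ : Fin (n + 1) => ρ).map (φ j)
        = (Measure.pi fun _ : Fin (n + 1) => ρ').map (φ' j) := by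
    intro ρ ρ' hρp hρ'p hρmap j
    haveI := hρp
    haveI := hρ'p
    have hpiρ : MeasurePreserving ιm (Measure.pi fun _ : Fin (n + 1) => ρ')
        (Measure.pi fun _ : Fin (n + 1) => ρ) :=
      measurePreserving_pi _ _ fun _ => ⟨hι.measurable, hρmap⟩
    have hSnull : (Measure.pi fun _ : Fin (n + 1) => ρ) Sᶜ = 0 := by
      rw [← hpiρ.map_eq, Measure.map_apply hιmm hSm.compl]
      have : ιm ⁻¹' Sᶜ = ∅ := by
        ext y
        simp only [Set.mem_preimage, Set.mem_compl_iff, Set.mem_empty_iff_false,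
          iff_false, not_not]
        exact hιmS y
      rw [this, measure_empty]
    set g₀ : (Fin (n + 1) → X) → X := fun x => φ' j (fun i => proj (x i)) with hg₀
    have hg₀m : Measurable g₀ :=
      (hφ'm j).comp (measurable_pi_iff.2 fun i => hproj.comp (measurable_pi_apply i))
    have hae : φ j =ᵐ[Measure.pi fun _ : Fin (n + 1) => ρ] g₀ := by
      filter_upwards [ae_mem_of_compl_null hSnull] with x hx
      have hxi : ∀ i, x i ∈ K := fun i => hx i (Set.mem_univ i)
      have : ιm (fun i => proj (x i)) = x := by
        funext i
        show ((proj (x i) : K) : X) = x i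
        rw [hprojdef]
        simp [hxi i]
      rw [hg₀, hφ'def]
      simp only []
      rw [this]
    have hφae : AEMeasurable (φ j) (Measure.pi fun _ : Fin (n + 1) => ρ) :=
      ⟨g₀, hg₀m, hae⟩
    calc (Measure.pi fun _ : Fin (n + 1) => ρ).map (φ j)
        = (((Measure.pi fun _ : Fin (n + 1) => ρ')).map ιm).map (φ j) := by
          rw [hpiρ.map_eq]
      _ = (Measure.pi fun _ : Fin (n + 1) => ρ').map (φ j ∘ ιm) := by
          apply AEMeasurable.map_map_of_aemeasurable
          · rwa [hpiρ.map_eq]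
          · exact hιmm.aemeasurable
      _ = (Measure.pi fun _ : Fin (n + 1) => ρ').map (φ' j) := rfl
  -- the sup argument
  have hA : 0 ≤ ∑ i, a i := Finset.sum_nonneg fun i _ => ha i
  have hD : 0 ≤ dMK μ ν := dMK_nonneg_s10 hKc hμK hνK
  apply Real.sSup_le _ (mul_nonneg hA hD)
  rintro s ⟨f, hf, rfl⟩
  -- rewrite both measures
  rw [show (∑ j, p j • (Measure.pi fun _ : Fin (n + 1) => μ).map (φ j))
      = ∑ j, p j • (Measure.pi fun _ : Fin (n + 1) => μ').map (φ' j) from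
    Finset.sum_congr rfl fun j _ => by rw [hmap μ μ' inferInstance hμ'p hμ'map j]]
  rw [show (∑ j, p j • (Measure.pi fun _ : Fin (n + 1) => ν).map (φ j))
      = ∑ j, p j • (Measure.pi fun _ : Fin (n + 1) => ν').map (φ' j) from
    Finset.sum_congr rfl fun j _ => by rw [hmap ν ν' inferInstance hν'p hν'map j]]
  -- integrability
  set g : Fin L → (Fin (n + 1) → K) → ℝ := fun j y => f (φ' j y) with hgdef
  have hgc : ∀ j, Continuous (g j) := fun j => hf.continuous.comp (hφ'c j)
  have hgint : ∀ j (ρ' : Measure (Fin (n + 1) → K)), IsProbabilityMeasure ρ' →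
      Integrable (g j) ρ' := by
    intro j ρ' hρ'
    haveI := hρ'
    obtain ⟨C, hC⟩ := isCompact_univ.exists_bound_of_continuousOn (hgc j).continuousOn
    exact (integrable_const C).mono' (hgc j).aestronglyMeasurable
      (Filter.Eventually.of_forall fun y => hC y trivial)
  have hfint : ∀ j (ρ' : Measure (Fin (n + 1) → K)), IsProbabilityMeasure ρ' →
      Integrable f (ρ'.map (φ' j)) := by
    intro j ρ' hρ'
    haveI := hρ'
    exact (integrable_map_measure hf.continuous.aestronglyMeasurable
      (hφ'm j).aemeasurable).2 (hgint j ρ' hρ')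
  have hIμ : ∫ x, f x ∂(∑ j, p j • (Measure.pi fun _ : Fin (n + 1) => μ').map (φ' j))
      = ∑ j, (p j : ℝ) * ∫ y, g j y ∂(Measure.pi fun _ : Fin (n + 1) => μ') := by
    rw [integral_finset_sum_measure fun j _ =>
      (hfint j _ inferInstance).smul_measure_nnreal]
    refine Finset.sum_congr rfl fun j _ => ?_
    rw [integral_smul_nnreal_measure,
      integral_map (hφ'm j).aemeasurable hf.continuous.aestronglyMeasurable]
    rfl
  have hIν : ∫ x, f x ∂(∑ j, p j • (Measure.pi fun _ : Fin (n + 1) => ν').map (φ' j))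
      = ∑ j, (p j : ℝ) * ∫ y, g j y ∂(Measure.pi fun _ : Fin (n + 1) => ν') := by
    rw [integral_finset_sum_measure fun j _ =>
      (hfint j _ inferInstance).smul_measure_nnreal]
    refine Finset.sum_congr rfl fun j _ => ?_
    rw [integral_smul_nnreal_measure,
      integral_map (hφ'm j).aemeasurable hf.continuous.aestronglyMeasurable]
    rfl
  rw [hIμ, hIν, ← Finset.sum_sub_distrib]
  -- per-j estimate
  have hperj : ∀ j, |∫ y, g j y ∂(Measure.pi fun _ : Fin (n + 1) => μ')
      - ∫ y, g j y ∂(Measure.pi fun _ : Fin (n + 1) => ν')|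
      ≤ (∑ i, a i) * dMK μ ν := by
    intro j
    apply key_hybrid μ' ν' a ha (g j) (hgc j)
    · -- Lipschitz-type bound
      intro x y
      have h1 : dist (g j x) (g j y) ≤ 1 * dist (φ' j x) (φ' j y) :=
        hf.dist_le_mul _ _
      rw [one_mul] at h1
      refine h1.trans ?_
      have h2 := hφ j (ιm x) (ιm y)
      refine h2.trans (le_of_eq (Finset.sum_congr rfl fun i _ => ?_))
      rw [Subtype.dist_eq]
    · -- key1 : extension of Lipschitz maps
      intro c hc w hw
      set u : X → ℝ := fun x => w (proj x) with hu
      have hulip : LipschitzOnWith c.toNNReal u K := by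
        rw [lipschitzOnWith_iff_dist_le_mul]
        intro x hx y hy
        have : dist (u x) (u y) = dist (w ⟨x, hx⟩) (w ⟨y, hy⟩) := by
          rw [hu]; simp only [hprojdef]; rw [dif_pos hx, dif_pos hy]
        rw [this, Real.coe_toNNReal c hc]
        calc dist (w ⟨x, hx⟩) (w ⟨y, hy⟩)
            ≤ c * dist (⟨x, hx⟩ : K) (⟨y, hy⟩ : K) := hw _ _
          _ = c * dist x y := by rw [Subtype.dist_eq]
      obtain ⟨W, hWlip, hWeq⟩ := hulip.extend_real
      have hWd : ∀ x y, dist (W x) (W y) ≤ c * dist x y := by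
        intro x y
        have := hWlip.dist_le_mul x y
        rwa [Real.coe_toNNReal c hc] at this
      have hest := dMK_scaled hKc hμK hνK hc hWd
      have hWw : ∀ y : K, W (y : X) = w y := by
        intro y
        rw [← hWeq y.2, hu]
        show w (proj (y : X)) = w y
        rw [hprojval]
      have hWμ : ∫ x, W x ∂μ = ∫ y, w y ∂μ' := by
        rw [← hμ'map, integral_map hι.measurable.aemeasurable
          hWlip.continuous.aestronglyMeasurable]
        exact integral_congr_ae (Filter.Eventually.of_forall fun y => hWw y)
      have hWν : ∫ x, W x ∂ν = ∫ y, w y ∂ν' := by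
        rw [← hν'map, integral_map hι.measurable.aemeasurable
          hWlip.continuous.aestronglyMeasurable]
        exact integral_congr_ae (Filter.Eventually.of_forall fun y => hWw y)
      rwa [hWμ, hWν] at hest
  -- sum up
  have hpj : ∀ j : Fin L, (0 : ℝ) ≤ (p j : ℝ) := fun j => (p j).2
  calc |∑ j, ((p j : ℝ) * ∫ y, g j y ∂(Measure.pi fun _ : Fin (n + 1) => μ')
        - (p j : ℝ) * ∫ y, g j y ∂(Measure.pi fun _ : Fin (n + 1) => ν'))|
      ≤ ∑ j, |(p j : ℝ) * ∫ y, g j y ∂(Measure.pi fun _ : Fin (n + 1) => μ')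
        - (p j : ℝ) * ∫ y, g j y ∂(Measure.pi fun _ : Fin (n + 1) => ν')| :=
        Finset.abs_sum_le_sum_abs _ _
    _ ≤ ∑ j : Fin L, (p j : ℝ) * ((∑ i, a i) * dMK μ ν) := by
        refine Finset.sum_le_sum fun j _ => ?_
        rw [← mul_sub, abs_mul, abs_of_nonneg (hpj j)]
        exact mul_le_mul_of_nonneg_left (hperj j) (hpj j)
    _ = (∑ i, a i) * dMK μ ν := by
        rw [← Finset.sum_mul]
        have : ∑ j : Fin L, (p j : ℝ) = 1 := by
          rw [← NNReal.coe_sum, hp1, NNReal.coe_one]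
        rw [this, one_mul]
end

section
/- Let (X,d) be a metric space and let S = (X,(φ_j)_{j=1}^L,(p_j)_{j=1}^L) be a GIFS with probabilities of order m consisting of continuous maps. Then for every compactly supported Borel probability measure μ on X, supp(M̄_S(μ)) = F̄_S(supp(μ)), i.e. the support of M̄_S(μ) := Σ_{j=1}^L p_j · φ_j♯(μ × ... × μ) equals ⋃_{j=1}^L φ_j(supp(μ) × ... × supp(μ)). -/
open MeasureTheory

/-- The topological support of a Borel measure. -/
def msupport {X : Type*} [TopologicalSpace X] [MeasurableSpace X]
    (μ : Measure X) : Set X :=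
  {x | ∀ U : Set X, IsOpen U → x ∈ U → 0 < μ U}

section Aux

variable {X : Type*} [MetricSpace X] [MeasurableSpace X] [BorelSpace X]

lemma msupport_isClosed (μ : Measure X) : IsClosed (msupport μ) := by
  rw [← isOpen_compl_iff, isOpen_iff_forall_mem_open]
  intro x hx
  simp only [msupport, Set.mem_compl_iff, Set.mem_setOf_eq, not_forall] at hx
  obtain ⟨U, hUo, hxU, hU0⟩ := hx
  refine ⟨U, fun y hy => ?_, hUo, hxU⟩
  simp only [msupport, Set.mem_compl_iff, Set.mem_setOf_eq, not_forall]
  exact ⟨U, hUo, hy, hU0⟩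

lemma msupport_subset_of_compl_null {μ : Measure X} {K : Set X} (hKc : IsClosed K)
    (hK : μ Kᶜ = 0) : msupport μ ⊆ K := by
  intro x hx
  by_contra hxK
  have := hx Kᶜ hKc.isOpen_compl hxK
  rw [hK] at this
  exact lt_irrefl _ this

lemma msupport_compl_null (μ : Measure X) [IsFiniteMeasure μ]
    {K : Set X} (hKcomp : IsCompact K) (hK : μ Kᶜ = 0) : μ (msupport μ)ᶜ = 0 := by
  by_contra h
  have hpos : (0 : ENNReal) < μ (msupport μ)ᶜ := pos_iff_ne_zero.mpr h
  obtain ⟨F, hFsub, hFcl, hFpos⟩ :=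
    (msupport_isClosed μ).isOpen_compl.exists_lt_isClosed hpos
  -- F ∩ K is compact and covered by null open sets
  have hFK : IsCompact (F ∩ K) := hKcomp.of_isClosed_subset (hFcl.inter hKcomp.isClosed)
    Set.inter_subset_right
  have hcov : ∀ x : ↥(F ∩ K), ∃ U : Set X, IsOpen U ∧ (x : X) ∈ U ∧ μ U = 0 := by
    rintro ⟨x, hxF, _⟩
    have hx := hFsub hxF
    simp only [msupport, Set.mem_compl_iff, Set.mem_setOf_eq, not_forall] at hx
    obtain ⟨U, hUo, hxU, hU0⟩ := hx
    exact ⟨U, hUo, hxU, by simpa using hU0⟩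
  choose V hVo hVm hVn using hcov
  obtain ⟨t, ht⟩ := hFK.elim_finite_subcover V hVo
    (fun y hy => Set.mem_iUnion.2 ⟨⟨y, hy⟩, hVm _⟩)
  have hFK0 : μ (F ∩ K) = 0 := by
    refine measure_mono_null ht ?_
    exact (measure_biUnion_null_iff t.countable_toSet).2 fun i _ => hVn i
  have hF0 : μ F = 0 := by
    have : μ F ≤ μ (F ∩ K) + μ Kᶜ := by
      refine le_trans (measure_mono ?_) (measure_union_le _ _)
      intro y hy
      by_cases hyK : y ∈ K
      · exact Or.inl ⟨hy, hyK⟩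
      · exact Or.inr hyK
    simpa [hFK0, hK] using this
  rw [hF0] at hFpos
  exact lt_irrefl _ hFpos

end Aux

/-- For a GIFS with probabilities, the support of the image of a compactly
supported probability measure under the diagonal generalized Markov operator is
the image of its support under the diagonal generalized Hutchinson operator. -/
theorem stmt12 {X : Type*} [MetricSpace X] [MeasurableSpace X] [BorelSpace X]
    {m L : ℕ} (hm : 1 ≤ m) (hL : 0 < L)
    (φ : Fin L → (Fin m → X) → X) (hφ : ∀ j, Continuous (φ j))
    (p : Fin L → NNReal) (hp : ∀ j, 0 < p j) (hp1 : ∑ j, p j = 1)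
    (μ : Measure X) [IsProbabilityMeasure μ]
    (hμ : ∃ K : Set X, IsCompact K ∧ μ Kᶜ = 0) :
    msupport (∑ j, p j • (Measure.pi fun _ : Fin m => μ).map (φ j))
      = ⋃ j, φ j '' Set.univ.pi (fun _ : Fin m => msupport μ) := by
  obtain ⟨K, hKcomp, hKnull⟩ := hμ
  set C : Set X := msupport μ with hCdef
  have hCclosed : IsClosed C := msupport_isClosed μ
  have hCsub : C ⊆ K := msupport_subset_of_compl_null hKcomp.isClosed hKnull
  have hCcomp : IsCompact C := hKcomp.of_isClosed_subset hCclosed hCsub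
  have hCnull : μ Cᶜ = 0 := msupport_compl_null μ hKcomp hKnull
  have hCne : C.Nonempty := by
    rcases Set.eq_empty_or_nonempty C with hE | hne
    · exfalso
      have : μ Set.univ = 0 := by
        have : (Set.univ : Set X) = Cᶜ := by rw [hE]; simp
        rw [this, hCnull]
      simpa [measure_univ] using this
    · exact hne
  obtain ⟨c₀, hc₀⟩ := hCne
  set PM : Measure (Fin m → X) := Measure.pi fun _ : Fin m => μ with hPMdef
  -- Product of the supports has full PM-measure
  have hpinull : PM (Set.univ.pi fun _ : Fin m => C)ᶜ = 0 := by
    have hsub2 : (Set.univ.pi fun _ : Fin m => C)ᶜ ⊆ ⋃ i : Fin m, Function.eval i ⁻¹' Cᶜ := by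
      intro y hy
      simp only [Set.mem_compl_iff, Set.mem_pi, Set.mem_univ, forall_true_left,
        not_forall] at hy
      obtain ⟨i, hi⟩ := hy
      exact Set.mem_iUnion.2 ⟨i, hi⟩
    exact measure_mono_null hsub2
      (measure_iUnion_null fun i => Measure.pi_eval_preimage_null _ hCnull)
  -- Each φ j is a.e. measurable with respect to PM
  have haem : ∀ j, AEMeasurable (φ j) PM := by
    intro j
    classical
    haveI : CompactSpace ↥C := isCompact_iff_compactSpace.mp hCcomp
    have hCm : MeasurableSet C := hCclosed.measurableSet
    haveI : BorelSpace ↥C := Subtype.borelSpace C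
    -- retraction to C
    set r : X → ↥C := fun x => ⟨if x ∈ C then x else c₀, by split_ifs with h; exacts [h, hc₀]⟩
      with hrdef
    have hr : Measurable r := by
      apply Measurable.subtype_mk
      exact Measurable.piecewise hCm measurable_id measurable_const
    set ψ : (Fin m → ↥C) → X := fun z => φ j fun i => (z i : X) with hψdef
    have hψc : Continuous ψ :=
      (hφ j).comp (continuous_pi fun i => continuous_subtype_val.comp (continuous_apply i))
    have hψm : Measurable ψ := hψc.measurable
    set g : (Fin m → X) → X := fun y => ψ fun i => r (y i) with hgdef
    have hg : Measurable g :=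
      hψm.comp (measurable_pi_lambda _ fun i => hr.comp (measurable_pi_apply i))
    refine ⟨g, hg, ?_⟩
    have hsub : (Set.univ.pi fun _ : Fin m => C) ⊆ {y | φ j y = g y} := by
      intro y hy
      simp only [Set.mem_setOf_eq, hgdef, hψdef]
      congr 1
      funext i
      exact (if_pos (show y i ∈ C from hy i (Set.mem_univ i))).symm
    exact (measure_mono_null (Set.compl_subset_compl.mpr hsub) hpinull)
  -- Evaluate the sum measure on measurable sets
  have hν_apply : ∀ U : Set X, MeasurableSet U →
      (∑ j, p j • PM.map (φ j)) U = ∑ j, (p j : ENNReal) * PM (φ j ⁻¹' U) := by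
    intro U hU
    rw [Measure.finset_sum_apply]
    refine Finset.sum_congr rfl fun j _ => ?_
    rw [Measure.smul_apply, Measure.map_apply_of_aemeasurable (haem j) hU]
    simp [ENNReal.smul_def, smul_eq_mul]
  ext x
  simp only [msupport, Set.mem_setOf_eq]
  constructor
  · -- support ⊆ union of images
    intro hx
    by_contra hnot
    set A : Set X := ⋃ j, φ j '' Set.univ.pi (fun _ : Fin m => C) with hAdef
    have hAcomp : IsCompact A :=
      isCompact_iUnion fun j => (isCompact_univ_pi fun _ => hCcomp).image (hφ j)
    have hAx : x ∈ Aᶜ := hnot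
    have hpos := hx Aᶜ hAcomp.isClosed.isOpen_compl hAx
    have hzero : (∑ j, p j • PM.map (φ j)) Aᶜ = 0 := by
      rw [hν_apply Aᶜ hAcomp.isClosed.measurableSet.compl]
      refine Finset.sum_eq_zero fun j _ => ?_
      have hpre : φ j ⁻¹' Aᶜ ⊆ (Set.univ.pi fun _ : Fin m => C)ᶜ := by
        intro y hy
        intro hyC
        exact hy (Set.mem_iUnion.2 ⟨j, Set.mem_image_of_mem _ hyC⟩)
      rw [measure_mono_null hpre hpinull, mul_zero]
    rw [hzero] at hpos
    exact lt_irrefl _ hpos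
  · -- union of images ⊆ support
    intro hx U hU hxU
    obtain ⟨j, y, hy, rfl⟩ := by
      simpa only [Set.mem_iUnion, Set.mem_image] using hx
    have hVopen : IsOpen (φ j ⁻¹' U) := hU.preimage (hφ j)
    have hyV : y ∈ φ j ⁻¹' U := hxU
    rw [isOpen_pi_iff] at hVopen
    obtain ⟨I, u, hu, hsub⟩ := hVopen y hyV
    set W : Fin m → Set X := fun i => if i ∈ I then u i else Set.univ with hWdef
    have hWsub : Set.univ.pi W ⊆ φ j ⁻¹' U := by
      intro z hz
      apply hsub
      intro i hi
      have hi' : i ∈ I := hi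
      have := hz i (Set.mem_univ i)
      simp only [hWdef] at this
      rwa [if_pos hi'] at this
    have hWpos : ∀ i, 0 < μ (W i) := by
      intro i
      by_cases hi : i ∈ I
      · have h1 := (hu i hi).1
        have h2 := (hu i hi).2
        have hyi : y i ∈ msupport μ := hy i (Set.mem_univ i)
        show 0 < μ (if i ∈ I then u i else Set.univ)
        rw [if_pos hi]
        exact hyi (u i) h1 h2
      · show 0 < μ (if i ∈ I then u i else Set.univ)
        rw [if_neg hi]
        simp [measure_univ]
    have hPMpos : 0 < PM (Set.univ.pi W) := by
      rw [hPMdef, Measure.pi_pi]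
      exact CanonicallyOrderedAdd.prod_pos.mpr fun i _ => hWpos i
    have hterm : 0 < (p j : ENNReal) * PM (φ j ⁻¹' U) := by
      refine ENNReal.mul_pos ?_ ?_
      · exact_mod_cast (hp j).ne'
      · exact (lt_of_lt_of_le hPMpos (measure_mono hWsub)).ne'
    rw [hν_apply U hU.measurableSet]
    refine lt_of_lt_of_le hterm ?_
    exact Finset.single_le_sum (f := fun j => (p j : ENNReal) * PM (φ j ⁻¹' U))
      (fun i _ => zero_le) (Finset.mem_univ j)
end

section
/- Let (X,d) be a complete metric space and let S = (X,(φ_j)_{j=1}^L) be a GIFS of order m in which each φ_j : X^m → X is Lipschitz (with respect to the maximum metric) with constant at most α_S < 1, and let A_S be the attractor of S. Let ε > 0, let X̂ be a proper ε-net of X, let r : X → X̂ be an ε-projection, and set φ̂_j := r ∘ φ_j and F̄_Ŝ(K) := ⋃_{j=1}^L φ̂_j(K × ... × K). Then for every nonempty finite K ⊆ X̂ and every n ∈ ℕ, h(F̄_Ŝⁿ(K), A_S) ≤ ε/(1−α_S) + α_Sⁿ · h(K, A_S). In particular, for all sufficiently large n, F̄_Ŝⁿ(K) is within Hausdorff distance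 2ε/(1−α_S) of A_S. -/
open Filter

/-- Discretization of the Hutchinson–Barnsley theorem for GIFSs: iterates of the
discretized generalized Hutchinson operator on any nonempty finite subset of a
proper `ε`-net approximate the attractor `A_S` with error
`ε/(1−α_S) + α_Sⁿ · h(K, A_S)`, and eventually with error `2ε/(1−α_S)`. -/
theorem stmt17 {X : Type*} [MetricSpace X] [CompleteSpace X]
    {m L : ℕ} (hm : 0 < m) (hL : 0 < L)
    (φ : Fin L → (Fin m → X) → X) (αS : NNReal) (hαS : αS < 1)
    (hφ : ∀ j, LipschitzWith αS (φ j))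
    (A : Set X) (hA : A.Nonempty) (hAc : IsCompact A)
    (hAfix : A = ⋃ j, φ j '' Set.univ.pi (fun _ : Fin m => A))
    (ε : ℝ) (hε : 0 < ε) (Xhat : Set X)
    (hnet : ∀ x : X, ∃ y ∈ Xhat, dist x y ≤ ε)
    (hproper : ∀ D : Set X, Bornology.IsBounded D → (D ∩ Xhat).Finite)
    (r : X → X) (hr_range : ∀ x, r x ∈ Xhat)
    (hr_id : ∀ x ∈ Xhat, r x = x)
    (hr_close : ∀ x, dist x (r x) ≤ ε)
    (K : Set X) (hK : K.Nonempty) (hKfin : K.Finite) (hKsub : K ⊆ Xhat) :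
    (∀ n : ℕ,
      Metric.hausdorffDist
        ((fun S => ⋃ j, (r ∘ φ j) '' Set.univ.pi (fun _ : Fin m => S))^[n] K) A
        ≤ ε / (1 - αS) + (αS : ℝ) ^ n * Metric.hausdorffDist K A) ∧
    ∀ᶠ n in atTop,
      Metric.hausdorffDist
        ((fun S => ⋃ j, (r ∘ φ j) '' Set.univ.pi (fun _ : Fin m => S))^[n] K) A
        ≤ 2 * ε / (1 - αS) := by

  classical
  set F : Set X → Set X :=
    (fun S => ⋃ j, (r ∘ φ j) '' Set.univ.pi (fun _ : Fin m => S)) with hF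
  have hα1 : (αS : ℝ) < 1 := hαS
  have hα0 : (0:ℝ) ≤ αS := αS.coe_nonneg
  have h1α : (0:ℝ) < 1 - αS := by linarith
  set h₀ := Metric.hausdorffDist K A with hh₀
  have h₀0 : 0 ≤ h₀ := Metric.hausdorffDist_nonneg
  set D : ℕ → ℝ := fun n => ε / (1 - αS) + (αS : ℝ) ^ n * h₀ with hD
  have hDnn : ∀ n, 0 ≤ D n := fun n =>
    add_nonneg (le_of_lt (div_pos hε h1α)) (mul_nonneg (pow_nonneg hα0 n) h₀0)
  -- one-step estimate
  have step : ∀ (S : Set X) (c : ℝ), 0 ≤ c →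
      (∀ x ∈ S, ∃ y ∈ A, dist x y ≤ c) → (∀ y ∈ A, ∃ x ∈ S, dist y x ≤ c) →
      (∀ x ∈ F S, ∃ y ∈ A, dist x y ≤ ε + αS * c) ∧
      (∀ y ∈ A, ∃ x ∈ F S, dist y x ≤ ε + αS * c) := by
    intro S c hc h1 h2
    constructor
    · intro x hx
      simp only [hF, Set.mem_iUnion, Set.mem_image, Function.comp] at hx
      obtain ⟨j, f, hf, rfl⟩ := hx
      simp only [Set.mem_univ_pi] at hf
      choose g hgA hgd using fun i => h1 (f i) (hf i)
      refine ⟨φ j g, ?_, ?_⟩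
      · rw [hAfix]
        exact Set.mem_iUnion.2 ⟨j, ⟨g, fun i _ => hgA i, rfl⟩⟩
      · calc dist (r (φ j f)) (φ j g)
            ≤ dist (r (φ j f)) (φ j f) + dist (φ j f) (φ j g) := dist_triangle _ _ _
          _ ≤ ε + αS * c := by
              refine add_le_add ?_ ?_
              · rw [dist_comm]; exact hr_close _
              · calc dist (φ j f) (φ j g) ≤ αS * dist f g := (hφ j).dist_le_mul f g
                  _ ≤ αS * c := mul_le_mul_of_nonneg_left
                      ((dist_pi_le_iff hc).2 fun i => hgd i) hα0
    · intro y hy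
      rw [hAfix] at hy
      simp only [Set.mem_iUnion, Set.mem_image] at hy
      obtain ⟨j, g, hg, rfl⟩ := hy
      simp only [Set.mem_univ_pi] at hg
      choose f hfS hfd using fun i => h2 (g i) (hg i)
      refine ⟨r (φ j f), ?_, ?_⟩
      · exact Set.mem_iUnion.2 ⟨j, ⟨f, fun i _ => hfS i, rfl⟩⟩
      · calc dist (φ j g) (r (φ j f))
            ≤ dist (φ j g) (φ j f) + dist (φ j f) (r (φ j f)) := dist_triangle _ _ _
          _ ≤ αS * c + ε := by
              refine add_le_add ?_ (hr_close _)
              calc dist (φ j g) (φ j f) ≤ αS * dist g f := (hφ j).dist_le_mul g f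
                _ ≤ αS * c := mul_le_mul_of_nonneg_left
                    ((dist_pi_le_iff hc).2 fun i => hfd i) hα0
          _ = ε + αS * c := by ring
  -- base case
  have hedist : EMetric.hausdorffEdist K A ≠ ⊤ :=
    Metric.hausdorffEdist_ne_top_of_nonempty_of_bounded hK hA hKfin.isBounded hAc.isBounded
  have base1 : ∀ x ∈ K, ∃ y ∈ A, dist x y ≤ h₀ := by
    intro x hx
    obtain ⟨y, hyA, hyd⟩ := hAc.exists_infDist_eq_dist hA x
    exact ⟨y, hyA, by rw [← hyd]; exact Metric.infDist_le_hausdorffDist_of_mem hx hedist⟩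
  have base2 : ∀ y ∈ A, ∃ x ∈ K, dist y x ≤ h₀ := by
    intro y hy
    obtain ⟨x, hxK, hxd⟩ := hKfin.isCompact.exists_infDist_eq_dist hK y
    refine ⟨x, hxK, ?_⟩
    rw [← hxd]
    calc Metric.infDist y K ≤ Metric.hausdorffDist A K :=
          Metric.infDist_le_hausdorffDist_of_mem hy (by rwa [EMetric.hausdorffEdist_comm])
      _ = h₀ := Metric.hausdorffDist_comm
  -- induction
  have main : ∀ n, (∀ x ∈ F^[n] K, ∃ y ∈ A, dist x y ≤ D n) ∧
      (∀ y ∈ A, ∃ x ∈ F^[n] K, dist y x ≤ D n) := by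
    intro n
    induction n with
    | zero =>
      have hle : h₀ ≤ D 0 := by
        simp only [hD, pow_zero, one_mul]
        linarith [div_pos hε h1α]
      refine ⟨fun x hx => ?_, fun y hy => ?_⟩
      · obtain ⟨y, hyA, hyd⟩ := base1 x (by simpa using hx)
        exact ⟨y, hyA, hyd.trans hle⟩
      · obtain ⟨x, hxK, hxd⟩ := base2 y hy
        exact ⟨x, by simpa using hxK, hxd.trans hle⟩
    | succ n ih =>
      have hstep := step (F^[n] K) (D n) (hDnn n) ih.1 ih.2
      have hDeq : ε + (αS : ℝ) * D n = D (n + 1) := by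
        simp only [hD]
        field_simp
        ring
      rw [Function.iterate_succ_apply']
      exact ⟨fun x hx => by
          obtain ⟨y, hyA, hyd⟩ := hstep.1 x hx
          exact ⟨y, hyA, hyd.trans_eq hDeq⟩,
        fun y hy => by
          obtain ⟨x, hxF, hxd⟩ := hstep.2 y hy
          exact ⟨x, hxF, hxd.trans_eq hDeq⟩⟩
  have key : ∀ n, Metric.hausdorffDist (F^[n] K) A ≤ D n := fun n =>
    Metric.hausdorffDist_le_of_mem_dist (hDnn n) (main n).1 (main n).2
  constructor
  · exact key
  · have htend : Tendsto (fun n => (αS : ℝ) ^ n * h₀) atTop (nhds 0) := by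
      simpa using (tendsto_pow_atTop_nhds_zero_of_lt_one hα0 hα1).mul_const h₀
    have hev : ∀ᶠ n in atTop, (αS : ℝ) ^ n * h₀ ≤ ε / (1 - αS) := by
      have := htend.eventually (eventually_le_nhds (div_pos hε h1α))
      simpa using this
    filter_upwards [hev] with n hn
    refine (key n).trans ?_
    have : D n ≤ ε / (1 - αS) + ε / (1 - αS) := by
      simp only [hD]; linarith
    refine this.trans (le_of_eq ?_)
    field_simp
    ring
end
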